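/- arXiv:2012.13531 — 2 statements merged into one kernel-verified Lean document; each statement's English description precedes it below -/
import Mathlib

section
/- Let α > −2 and let N ≥ 3 be an integer. There exists a constant C > 0, depending only on N and α, such that every entire radial solution (u, v) of Δ²u = |x|^α e^u normalized by u(0) = 0 satisfies u(r) ≤ −(4+α) ln r + C for all r > 0. -/
open MeasureTheory Real Set Filter

noncomputable section

/-- An entire radial solution of `Δ²u = |x|^α e^u` in dimension `N`, normalized by
`u(0) = 0`: a pair of `C²` functions `u, v` on `[0,∞)` with `u(0) = 0`,
`u′(0) = v′(0) = 0` (one-sided derivatives at `0`), satisfying for all `r > 0`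
`u″(r) + (N-1)u′(r)/r = v(r)` and `v″(r) + (N-1)v′(r)/r = r^α e^{u(r)}`. -/
def IsEntireRadialSolution (N : ℕ) (α : ℝ) (u v : ℝ → ℝ) : Prop :=
  ContDiffOn ℝ 2 u (Set.Ici 0) ∧ ContDiffOn ℝ 2 v (Set.Ici 0) ∧
  u 0 = 0 ∧ derivWithin u (Set.Ici 0) 0 = 0 ∧ derivWithin v (Set.Ici 0) 0 = 0 ∧
  (∀ r > (0 : ℝ), deriv (deriv u) r + ((N : ℝ) - 1) * deriv u r / r = v r) ∧
  (∀ r > (0 : ℝ), deriv (deriv v) r + ((N : ℝ) - 1) * deriv v r / r = r ^ α * Real.exp (u r))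

/-- The set of initial data `β = v(0)` for which an entire radial solution exists. -/
def entireSet (N : ℕ) (α : ℝ) : Set ℝ :=
  {β : ℝ | ∃ u v : ℝ → ℝ, IsEntireRadialSolution N α u v ∧ v 0 = β}

private lemma my_incr {f F : ℝ → ℝ} {a b K : ℝ} (hab : a ≤ b)
    (hf : ∀ x ∈ Icc a b, HasDerivAt f (F x) x)
    (hK : ∀ x ∈ Icc a b, K ≤ F x) : K * (b - a) ≤ f b - f a := by
  have hcont : ContinuousOn f (Icc a b) := fun x hx => (hf x hx).continuousAt.continuousWithinAt
  have hdiff : DifferentiableOn ℝ f (interior (Icc a b)) := by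
    rw [interior_Icc]; exact fun x hx => ((hf x (Ioo_subset_Icc_self hx)).differentiableAt).differentiableWithinAt
  refine (convex_Icc a b).mul_sub_le_image_sub_of_le_deriv hcont hdiff ?_ a ⟨le_rfl, hab⟩ b ⟨hab, le_rfl⟩ hab
  intro x hx
  rw [interior_Icc] at hx
  rw [(hf x (Ioo_subset_Icc_self hx)).deriv]
  exact hK x (Ioo_subset_Icc_self hx)

private lemma my_decr {f F : ℝ → ℝ} {a b K : ℝ} (hab : a ≤ b)
    (hf : ∀ x ∈ Icc a b, HasDerivAt f (F x) x)
    (hK : ∀ x ∈ Icc a b, F x ≤ K) : f b - f a ≤ K * (b - a) := by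
  have := my_incr (f := fun x => -f x) (F := fun x => -F x) (K := -K) hab
    (fun x hx => (hf x hx).neg) (fun x hx => neg_le_neg (hK x hx))
  simp at this; linarith

private lemma my_monoOn {f F : ℝ → ℝ} {a : ℝ}
    (hcont : ContinuousOn f (Ici a))
    (hf : ∀ x ∈ Ioi a, HasDerivAt f (F x) x)
    (hF : ∀ x ∈ Ioi a, 0 ≤ F x) : MonotoneOn f (Ici a) := by
  refine monotoneOn_of_deriv_nonneg (convex_Ici a) hcont ?_ ?_
  · rw [interior_Ici]; exact fun x hx => ((hf x hx).differentiableAt).differentiableWithinAt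
  · rw [interior_Ici]; intro x hx; rw [(hf x hx).deriv]; exact hF x hx

private lemma my_antiOn {f F : ℝ → ℝ} {a : ℝ}
    (hcont : ContinuousOn f (Ici a))
    (hf : ∀ x ∈ Ioi a, HasDerivAt f (F x) x)
    (hF : ∀ x ∈ Ioi a, F x ≤ 0) : AntitoneOn f (Ici a) := by
  refine antitoneOn_of_deriv_nonpos (convex_Ici a) hcont ?_ ?_
  · rw [interior_Ici]; exact fun x hx => ((hf x hx).differentiableAt).differentiableWithinAt
  · rw [interior_Ici]; intro x hx; rw [(hf x hx).deriv]; exact hF x hx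

noncomputable def klo (α : ℝ) : ℝ := min ((2:ℝ)^α) (((2:ℝ)^α)⁻¹)

lemma klo_pos (α : ℝ) : 0 < klo α :=
  lt_min (rpow_pos_of_pos two_pos α) (inv_pos.2 (rpow_pos_of_pos two_pos α))

lemma klo_le_one (α : ℝ) : klo α ≤ 1 := by
  rcases le_or_gt 1 ((2:ℝ)^α) with h | h
  · exact le_trans (min_le_right _ _) (inv_le_one_of_one_le₀ h)
  · exact le_trans (min_le_left _ _) h.le

lemma rpow_pair {α t s : ℝ} (ht : 0 < t) (hts : t ≤ s) (hst : s ≤ 2*t) :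
    klo α * t^α ≤ s^α ∧ klo α * s^α ≤ t^α := by
  have hs : 0 < s := lt_of_lt_of_le ht hts
  have h2t : ((2:ℝ)*t)^α = (2:ℝ)^α * t^α := mul_rpow (by norm_num) ht.le
  have htp : (0:ℝ) < t^α := rpow_pos_of_pos ht α
  have hsp : (0:ℝ) < s^α := rpow_pos_of_pos hs α
  rcases le_or_gt 0 α with hα | hα
  · constructor
    · calc klo α * t^α ≤ 1 * t^α := by
            exact mul_le_mul_of_nonneg_right (klo_le_one α) htp.le
        _ = t^α := one_mul _
        _ ≤ s^α := rpow_le_rpow ht.le hts hα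
    · have h1 : s^α ≤ (2:ℝ)^α * t^α := by
        rw [← h2t]; exact rpow_le_rpow hs.le hst hα
      have h2 : klo α ≤ ((2:ℝ)^α)⁻¹ := min_le_right _ _
      have h3 : ((2:ℝ)^α)⁻¹ * s^α ≤ t^α := by
        rw [inv_mul_le_iff₀ (rpow_pos_of_pos two_pos α)]
        linarith
      calc klo α * s^α ≤ ((2:ℝ)^α)⁻¹ * s^α := mul_le_mul_of_nonneg_right h2 hsp.le
        _ ≤ t^α := h3
  · constructor
    · have h1 : ((2:ℝ)*t)^α ≤ s^α := rpow_le_rpow_of_nonpos hs hst hα.le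
      rw [h2t] at h1
      calc klo α * t^α ≤ (2:ℝ)^α * t^α :=
            mul_le_mul_of_nonneg_right (min_le_left _ _) htp.le
        _ ≤ s^α := h1
    · have h1 : s^α ≤ t^α := rpow_le_rpow_of_nonpos ht hts hα.le
      calc klo α * s^α ≤ 1 * s^α := mul_le_mul_of_nonneg_right (klo_le_one α) hsp.le
        _ = s^α := one_mul _
        _ ≤ t^α := h1

private lemma my_monoOn' {f F : ℝ → ℝ} {a : ℝ}
    (hf : ∀ x ∈ Ioi a, HasDerivAt f (F x) x)
    (hF : ∀ x ∈ Ioi a, 0 ≤ F x) : MonotoneOn f (Ioi a) := by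
  refine monotoneOn_of_deriv_nonneg (convex_Ioi a)
    (fun x hx => (hf x hx).continuousAt.continuousWithinAt) ?_ ?_
  · rw [interior_Ioi]; exact fun x hx => ((hf x hx).differentiableAt).differentiableWithinAt
  · rw [interior_Ioi]; intro x hx; rw [(hf x hx).deriv]; exact hF x hx


-- derivative facts for a C² function on Ici 0
private lemma deriv2 {f : ℝ → ℝ} (hf : ContDiffOn ℝ 2 f (Ici 0)) :
    (∀ r ∈ Ioi (0:ℝ), HasDerivAt f (deriv f r) r) ∧
    (∀ r ∈ Ioi (0:ℝ), HasDerivAt (deriv f) (deriv (deriv f) r) r) ∧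
    ContinuousOn (deriv f) (Ioi 0) := by
  have h1 : ContDiffOn ℝ 2 f (Ioi 0) := hf.mono Ioi_subset_Ici_self
  have h2 : ContDiffOn ℝ 1 (deriv f) (Ioi 0) := by
    have := h1.deriv_of_isOpen isOpen_Ioi (m := 1) (by norm_num)
    exact this
  refine ⟨fun r hr => ?_, fun r hr => ?_, h2.continuousOn⟩
  · have : DifferentiableOn ℝ f (Ioi 0) := h1.differentiableOn (by norm_num)
    exact (this.differentiableAt (isOpen_Ioi.mem_nhds hr)).hasDerivAt
  · have : DifferentiableOn ℝ (deriv f) (Ioi 0) := h2.differentiableOn (by norm_num)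
    exact (this.differentiableAt (isOpen_Ioi.mem_nhds hr)).hasDerivAt

-- the one-sided derivative at 0 controls the limit of deriv
private lemma deriv_tendsto {f : ℝ → ℝ} (hf : ContDiffOn ℝ 2 f (Ici 0))
    (h0 : derivWithin f (Ici 0) 0 = 0) :
    Tendsto (deriv f) (nhdsWithin 0 (Ioi 0)) (nhds 0) := by
  have hc : ContinuousOn (derivWithin f (Ici 0)) (Ici 0) :=
    hf.continuousOn_derivWithin (uniqueDiffOn_Ici 0) (by norm_num : (1 : WithTop ℕ∞) ≤ 2)
  have h1 : Tendsto (derivWithin f (Ici 0)) (nhdsWithin 0 (Ioi 0)) (nhds 0) := by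
    have := (hc 0 (self_mem_Ici)).tendsto
    rw [h0] at this
    exact this.mono_left (nhdsWithin_mono 0 Ioi_subset_Ici_self)
  refine h1.congr' ?_
  filter_upwards [self_mem_nhdsWithin] with x hx
  exact derivWithin_of_mem_nhds (f := f) (s := Ici 0) (Ici_mem_nhds hx)

section nfacts
variable {N : ℕ}

-- generic: if f'' + (N-1) f'/r = g on (0,infty), then (r^{N-1} f')' = r^{N-1} g
private lemma hasDerivAt_m {f g : ℝ → ℝ} (hN : 3 ≤ N)
    (hd1 : ∀ r ∈ Ioi (0:ℝ), HasDerivAt (deriv f) (deriv (deriv f) r) r)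
    (ode : ∀ r > (0:ℝ), deriv (deriv f) r + ((N : ℝ) - 1) * deriv f r / r = g r)
    {r : ℝ} (hr : 0 < r) :
    HasDerivAt (fun x => x ^ (N-1) * deriv f x) (r ^ (N-1) * g r) r := by
  have h1 : HasDerivAt (fun x : ℝ => x ^ (N-1)) ((N-1 : ℕ) * r ^ (N-1-1)) r := hasDerivAt_pow (N-1) r
  have h2 := (h1.mul (hd1 r hr))
  refine h2.congr_deriv ?_
  have hode := ode r hr
  have hr' : r ≠ 0 := ne_of_gt hr
  have hNR : ((N - 1 : ℕ) : ℝ) = (N : ℝ) - 1 := by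
    have : (1:ℕ) ≤ N := by omega
    push_cast [Nat.cast_sub this]; ring
  have hpow : r ^ (N - 1) = r ^ (N - 1 - 1) * r := by
    rw [← pow_succ]; congr 1; omega
  have h3 : deriv (deriv f) r = g r - ((N : ℝ) - 1) * deriv f r / r := by linarith
  rw [h3, hNR, hpow]
  field_simp
  ring

private lemma m_nonneg {f G : ℝ → ℝ}
    (hm : ∀ r ∈ Ioi (0:ℝ), HasDerivAt (fun x => x ^ (N-1) * deriv f x) (G r) r)
    (hG : ∀ r ∈ Ioi (0:ℝ), 0 ≤ G r)
    (h0 : Tendsto (deriv f) (nhdsWithin 0 (Ioi 0)) (nhds 0)) :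
    ∀ r > (0:ℝ), 0 ≤ r ^ (N-1) * deriv f r := by
  set m : ℝ → ℝ := fun x => x ^ (N-1) * deriv f x with hmdef
  have hmono : MonotoneOn m (Ioi 0) := my_monoOn' hm hG
  intro r₀ hr₀
  by_contra hneg
  push_neg at hneg
  have hev1 : ∀ᶠ s in nhdsWithin 0 (Ioi 0), m r₀ < deriv f s :=
    h0.eventually (eventually_gt_nhds hneg)
  have hev2 : Ioo (0:ℝ) (min r₀ 1) ∈ nhdsWithin 0 (Ioi 0) :=
    Ioo_mem_nhdsGT_of_mem ⟨le_rfl, lt_min hr₀ one_pos⟩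
  obtain ⟨s, hs1, hs2⟩ := (hev1.and (eventually_of_mem hev2 (fun x hx => hx))).exists
  obtain ⟨hs0, hsm⟩ := hs2
  have hsr : s < r₀ := lt_of_lt_of_le hsm (min_le_left _ _)
  have hs1' : s ≤ 1 := le_of_lt (lt_of_lt_of_le hsm (min_le_right _ _))
  have hms : m s ≤ m r₀ := hmono hs0 hr₀ (le_of_lt hsr)
  have hmr : m r₀ < 0 := hneg
  have hmsv : m s = s ^ (N-1) * deriv f s := rfl
  have hds : deriv f s < 0 := by
    by_contra hd
    push_neg at hd
    have : 0 ≤ m s := mul_nonneg (pow_nonneg (le_of_lt hs0) _) hd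
    linarith
  have hsp : s ^ (N-1) ≤ 1 := pow_le_one₀ (le_of_lt hs0) hs1'
  have key : deriv f s ≤ s ^ (N-1) * deriv f s := by nlinarith
  linarith

end nfacts

private lemma my_antiOn' {f F : ℝ → ℝ} {a : ℝ}
    (hf : ∀ x ∈ Ioi a, HasDerivAt f (F x) x)
    (hF : ∀ x ∈ Ioi a, F x ≤ 0) : AntitoneOn f (Ioi a) := by
  refine antitoneOn_of_deriv_nonpos (convex_Ioi a)
    (fun x hx => (hf x hx).continuousAt.continuousWithinAt) ?_ ?_
  · rw [interior_Ioi]; exact fun x hx => ((hf x hx).differentiableAt).differentiableWithinAt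
  · rw [interior_Ioi]; intro x hx; rw [(hf x hx).deriv]; exact hF x hx




-- mirror of m_nonneg
private lemma m_nonpos {N : ℕ} {f G : ℝ → ℝ}
    (hm : ∀ r ∈ Ioi (0:ℝ), HasDerivAt (fun x => x ^ (N-1) * deriv f x) (G r) r)
    (hG : ∀ r ∈ Ioi (0:ℝ), G r ≤ 0)
    (h0 : Tendsto (deriv f) (nhdsWithin 0 (Ioi 0)) (nhds 0)) :
    ∀ r > (0:ℝ), r ^ (N-1) * deriv f r ≤ 0 := by
  set m : ℝ → ℝ := fun x => x ^ (N-1) * deriv f x with hmdef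
  have hanti : AntitoneOn m (Ioi 0) := my_antiOn' hm hG
  intro r₀ hr₀
  by_contra hneg
  push_neg at hneg
  have hmr : 0 < m r₀ := hneg
  have hev1 : ∀ᶠ s in nhdsWithin 0 (Ioi 0), deriv f s < m r₀ :=
    h0.eventually (eventually_lt_nhds hmr)
  have hev2 : Ioo (0:ℝ) (min r₀ 1) ∈ nhdsWithin 0 (Ioi 0) :=
    Ioo_mem_nhdsGT_of_mem ⟨le_rfl, lt_min hr₀ one_pos⟩
  obtain ⟨s, hs1, hs2⟩ := (hev1.and (eventually_of_mem hev2 (fun x hx => hx))).exists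
  obtain ⟨hs0, hsm⟩ := hs2
  have hsr : s < r₀ := lt_of_lt_of_le hsm (min_le_left _ _)
  have hs1' : s ≤ 1 := le_of_lt (lt_of_lt_of_le hsm (min_le_right _ _))
  have hms : m r₀ ≤ m s := hanti hs0 hr₀ (le_of_lt hsr)
  have hmsv : m s = s ^ (N-1) * deriv f s := rfl
  have hds : 0 < deriv f s := by
    by_contra hd
    push_neg at hd
    have : m s ≤ 0 := mul_nonpos_of_nonneg_of_nonpos (pow_nonneg (le_of_lt hs0) _) hd
    linarith
  have hsp : s ^ (N-1) ≤ 1 := pow_le_one₀ (le_of_lt hs0) hs1'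
  have key : s ^ (N-1) * deriv f s ≤ deriv f s := by nlinarith
  linarith

private lemma mul3_le {a b c A B C : ℝ} (ha : a ≤ A) (hb : b ≤ B) (hc : c ≤ C)
    (ha0 : 0 ≤ a) (hb0 : 0 ≤ b) (hc0 : 0 ≤ c) : a*b*c ≤ A*B*C := by
  have h1 : a*b ≤ A*B := mul_le_mul ha hb hb0 (le_trans ha0 ha)
  exact mul_le_mul h1 hc hc0 (mul_nonneg (le_trans ha0 ha) (le_trans hb0 hb))


section chain
variable {N : ℕ} {α : ℝ} {u v : ℝ → ℝ}

set_option maxHeartbeats 2000000 in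
private lemma case1_key (hN : 3 ≤ N)
    (hu : AntitoneOn u (Ici 0))
    (hw' : ∀ x ∈ Ioi (0:ℝ), HasDerivAt (fun y => y^(N-1) * deriv v y) (x^(N-1) * (x^α * Real.exp (u x))) x)
    (hm' : ∀ x ∈ Ioi (0:ℝ), HasDerivAt (fun y => y^(N-1) * deriv u y) (x^(N-1) * v x) x)
    (hdv : ∀ x ∈ Ioi (0:ℝ), HasDerivAt v (deriv v x) x)
    (hdu : ∀ x ∈ Ioi (0:ℝ), HasDerivAt u (deriv u x) x)
    (hw0 : ∀ x > (0:ℝ), 0 ≤ x^(N-1) * deriv v x)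
    (hm0 : ∀ x > (0:ℝ), x^(N-1) * deriv u x ≤ 0)
    (hv0 : ∀ x > (0:ℝ), v x ≤ 0)
    {t : ℝ} (ht : 0 < t) :
    u (4*t) ≤ u (2*t) - (klo α * 4 * (((4:ℝ)^(N-1))^2)⁻¹) * (t^4 * t^α) * Real.exp (u (4*t)) := by
  set k := klo α with hk
  have hkpos := klo_pos α
  have h2t : (0:ℝ) < 2*t := by linarith
  have h4t : (0:ℝ) < 4*t := by linarith
  set P := (4*t)^(N-1) with hPdef
  have hP : 0 < P := pow_pos h4t _
  set K₁ := t^(N-1) * (k * t^α) * Real.exp (u (2*t)) with hK₁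
  have hK₁pos : 0 < K₁ := by positivity
  -- Step (i)-(ii): w(2t) ≥ K₁ * t
  have h_ii : K₁ * (2*t - t) ≤ (fun y => y^(N-1) * deriv v y) (2*t) - (fun y => y^(N-1) * deriv v y) t := by
    refine my_incr (by linarith) (fun x hx => hw' x (by exact lt_of_lt_of_le ht hx.1)) ?_
    rintro x ⟨hx1, hx2⟩
    have hx0 : 0 < x := lt_of_lt_of_le ht hx1
    have ha : t^(N-1) ≤ x^(N-1) := pow_le_pow_left₀ ht.le hx1 _
    have hb : k * t^α ≤ x^α := (rpow_pair ht hx1 hx2).1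
    have hc : Real.exp (u (2*t)) ≤ Real.exp (u x) :=
      Real.exp_le_exp.2 (hu (mem_Ici.2 hx0.le) (mem_Ici.2 h2t.le) hx2)
    calc K₁ = t^(N-1) * (k * t^α) * Real.exp (u (2*t)) := rfl
      _ ≤ x^(N-1) * x^α * Real.exp (u x) :=
          mul3_le ha hb hc (by positivity) (by positivity) (by positivity)
      _ = x^(N-1) * (x^α * Real.exp (u x)) := by ring
  have hw2t : K₁ * t ≤ (2*t)^(N-1) * deriv v (2*t) := by
    have hwt := hw0 t ht
    have he : 2*t - t = t := by ring
    rw [he] at h_ii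
    simp only at h_ii
    linarith
  -- Step (iii): deriv v ≥ K₂ on [2t,4t]
  set K₂ := K₁ * t / P with hK₂
  have hK₂pos : 0 < K₂ := by positivity
  have hwmono : MonotoneOn (fun y => y^(N-1) * deriv v y) (Ioi 0) :=
    my_monoOn' hw' (fun x hx => by have : (0:ℝ) < x := hx; positivity)
  have h_iii : ∀ x ∈ Icc (2*t) (4*t), K₂ ≤ deriv v x := by
    rintro x ⟨hx1, hx2⟩
    have hx0 : 0 < x := lt_of_lt_of_le h2t hx1
    have h1 : (2*t)^(N-1) * deriv v (2*t) ≤ x^(N-1) * deriv v x :=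
      hwmono (mem_Ioi.2 h2t) (mem_Ioi.2 hx0) hx1
    have hdvx : 0 ≤ deriv v x := by
      have := hw0 x hx0
      have hxp : (0:ℝ) < x^(N-1) := pow_pos hx0 _
      nlinarith
    have h2 : x^(N-1) ≤ P := pow_le_pow_left₀ hx0.le hx2 _
    have h3 : x^(N-1) * deriv v x ≤ P * deriv v x :=
      mul_le_mul_of_nonneg_right h2 hdvx
    rw [hK₂, div_le_iff₀ hP]
    calc K₁ * t ≤ x^(N-1) * deriv v x := le_trans hw2t h1
      _ ≤ P * deriv v x := h3
      _ = deriv v x * P := by ring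
  -- Step (iv): v(2t) ≤ -A
  have h_iv : K₂ * (4*t - 2*t) ≤ v (4*t) - v (2*t) :=
    my_incr (by linarith) (fun x hx => hdv x (lt_of_lt_of_le h2t hx.1)) h_iii
  set A := K₂ * (2*t) with hA
  have hApos : 0 < A := by positivity
  have hv2t : v (2*t) ≤ -A := by
    have := hv0 (4*t) h4t
    have he : 4*t - 2*t = 2*t := by ring
    rw [he] at h_iv
    rw [hA]; linarith
  -- Step (v)-(vi): m(2t) ≤ -B
  have hvmono : MonotoneOn v (Ioi 0) := by
    refine my_monoOn' hdv (fun x hx => ?_)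
    have hx0 : (0:ℝ) < x := hx
    have := hw0 x hx0
    have hxp : (0:ℝ) < x^(N-1) := pow_pos hx0 _
    nlinarith
  have h_v : ∀ x ∈ Icc t (2*t), x^(N-1) * v x ≤ -(t^(N-1) * A) := by
    rintro x ⟨hx1, hx2⟩
    have hx0 : 0 < x := lt_of_lt_of_le ht hx1
    have hvx : v x ≤ -A := le_trans (hvmono (mem_Ioi.2 hx0) (mem_Ioi.2 h2t) hx2) hv2t
    have hvx0 : v x ≤ 0 := le_trans hvx (by linarith)
    have ha : t^(N-1) ≤ x^(N-1) := pow_le_pow_left₀ ht.le hx1 _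
    have h1 : x^(N-1) * v x ≤ t^(N-1) * v x := mul_le_mul_of_nonpos_right ha hvx0
    have h2 : t^(N-1) * v x ≤ t^(N-1) * (-A) :=
      mul_le_mul_of_nonneg_left hvx (by positivity)
    calc x^(N-1) * v x ≤ t^(N-1) * (-A) := le_trans h1 h2
      _ = -(t^(N-1) * A) := by ring
  have h_vi : (fun y => y^(N-1) * deriv u y) (2*t) - (fun y => y^(N-1) * deriv u y) t ≤ -(t^(N-1) * A) * (2*t - t) :=
    my_decr (by linarith) (fun x hx => hm' x (lt_of_lt_of_le ht hx.1)) h_v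
  set B := t^(N-1) * A * t with hB
  have hBpos : 0 < B := by positivity
  have hm2t : (2*t)^(N-1) * deriv u (2*t) ≤ -B := by
    have hmt := hm0 t ht
    have he : 2*t - t = t := by ring
    rw [he] at h_vi
    simp only at h_vi
    rw [hB]; linarith
  -- Step (vii): deriv u ≤ -(B/P) on [2t,4t]
  have hmanti : AntitoneOn (fun y => y^(N-1) * deriv u y) (Ioi 0) :=
    my_antiOn' hm' (fun x hx => by
      have hx0 : (0:ℝ) < x := hx
      have := hv0 x hx0
      have hxp : (0:ℝ) ≤ x^(N-1) := (pow_pos hx0 _).le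
      nlinarith)
  have h_vii : ∀ x ∈ Icc (2*t) (4*t), deriv u x ≤ -(B/P) := by
    rintro x ⟨hx1, hx2⟩
    have hx0 : 0 < x := lt_of_lt_of_le h2t hx1
    have h1 : x^(N-1) * deriv u x ≤ (2*t)^(N-1) * deriv u (2*t) :=
      hmanti (mem_Ioi.2 h2t) (mem_Ioi.2 hx0) hx1
    have hdux : deriv u x ≤ 0 := by
      have := hm0 x hx0
      have hxp : (0:ℝ) < x^(N-1) := pow_pos hx0 _
      nlinarith
    have h2 : x^(N-1) ≤ P := pow_le_pow_left₀ hx0.le hx2 _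
    have h3 : P * deriv u x ≤ x^(N-1) * deriv u x := mul_le_mul_of_nonpos_right h2 hdux
    have : deriv u x * P ≤ -B := by
      calc deriv u x * P = P * deriv u x := by ring
        _ ≤ x^(N-1) * deriv u x := h3
        _ ≤ (2*t)^(N-1) * deriv u (2*t) := h1
        _ ≤ -B := hm2t
    rw [show -(B/P) = (-B)/P by ring]
    rw [le_div_iff₀ hP]
    exact this
  -- Step (viii)
  have h_viii : u (4*t) - u (2*t) ≤ -(B/P) * (4*t - 2*t) :=
    my_decr (by linarith) (fun x hx => hdu x (lt_of_lt_of_le h2t hx.1)) h_vii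
  -- Final algebra
  have hdrop : -(B/P) * (4*t - 2*t) = -(k * 4 * (((4:ℝ)^(N-1))^2)⁻¹ * (t^4 * t^α) * Real.exp (u (2*t))) := by
    have hP4 : P = (4:ℝ)^(N-1) * t^(N-1) := by rw [hPdef, mul_pow]
    have h4p : (0:ℝ) < (4:ℝ)^(N-1) := by positivity
    have htp : (0:ℝ) < t^(N-1) := by positivity
    rw [hB, hA, hK₂, hK₁, hP4]
    field_simp
    ring
  have hexp : Real.exp (u (4*t)) ≤ Real.exp (u (2*t)) :=
    Real.exp_le_exp.2 (hu (mem_Ici.2 h2t.le) (mem_Ici.2 h4t.le) (by linarith))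
  rw [hdrop] at h_viii
  have hcoef : (0:ℝ) ≤ k * 4 * (((4:ℝ)^(N-1))^2)⁻¹ * (t^4 * t^α) := by positivity
  nlinarith [mul_le_mul_of_nonneg_left hexp hcoef]
end chain

private lemma dyadic (α c : ℝ) (hα : -2 < α) (hc : 0 < c) :
    ∃ C > (0:ℝ), ∀ u : ℝ → ℝ, AntitoneOn u (Ici 0) → u 0 = 0 →
      (∀ t > (0:ℝ), u (4*t) ≤ u (2*t) - c * (t^4 * t^α) * Real.exp (u (4*t))) →
      ∀ r > (0:ℝ), u r ≤ -(4+α) * Real.log r + C := by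
  set γ := 4 + α with hγ
  have hγpos : 0 < γ := by simp only [hγ]; linarith
  set L := Real.log 2 with hL
  have hLpos : 0 < L := Real.log_pos (by norm_num)
  set c' := c * klo α / 16 * Real.exp (-(γ*L)) with hc'
  have hc'pos : 0 < c' := by
    have := klo_pos α
    positivity
  set D := 1 + γ*L + |Real.log (γ*L/c')| with hD
  have hDpos : 0 < D := by positivity
  refine ⟨γ*L + D + 1, by positivity, ?_⟩
  intro u hu h0 hkey r hr
  -- the dyadic recursion
  have hd : ∀ k : ℕ, u ((2:ℝ)^k) + γ*k*L ≤ D := by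
    intro k
    induction k with
    | zero =>
      simp only [pow_zero, Nat.cast_zero]
      have : u 1 ≤ u 0 := hu (mem_Ici.2 (by norm_num)) (mem_Ici.2 zero_le_one) zero_le_one
      rw [h0] at this
      linarith
    | succ k ih =>
      set ρ := (2:ℝ)^k with hρ
      have hρpos : (0:ℝ) < ρ := by positivity
      set t := ρ/2 with htdef
      have ht : 0 < t := by positivity
      have h4 : 4*t = (2:ℝ)^(k+1) := by rw [pow_succ]; simp only [htdef]; ring
      have h2 : 2*t = ρ := by simp only [htdef]; ring
      have hk1 := hkey t ht
      rw [h4, h2] at hk1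
      -- lower bound the drop
      have htα : klo α * ρ^α ≤ t^α :=
        (rpow_pair (α := α) ht (by rw [htdef]; linarith) h2.ge).2
      have ht4 : t^4 = ρ^4/16 := by rw [htdef]; ring
      have hEpos : (0:ℝ) < Real.exp (u ((2:ℝ)^(k+1))) := Real.exp_pos _
      have hρα : (0:ℝ) < ρ^α := rpow_pos_of_pos hρpos α
      have hdrop : c * klo α / 16 * (ρ^4 * ρ^α) * Real.exp (u ((2:ℝ)^(k+1)))
          ≤ c * (t^4 * t^α) * Real.exp (u ((2:ℝ)^(k+1))) := by
        have h := mul_le_mul_of_nonneg_left htα (show (0:ℝ) ≤ c/16*ρ^4 by positivity)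
        have h2' := mul_le_mul_of_nonneg_right h hEpos.le
        calc c * klo α / 16 * (ρ^4 * ρ^α) * Real.exp (u ((2:ℝ)^(k+1)))
            = (c/16*ρ^4 * (klo α * ρ^α)) * Real.exp (u ((2:ℝ)^(k+1))) := by ring
          _ ≤ (c/16*ρ^4 * t^α) * Real.exp (u ((2:ℝ)^(k+1))) := h2'
          _ = c * (ρ^4/16 * t^α) * Real.exp (u ((2:ℝ)^(k+1))) := by ring
          _ = c * (t^4 * t^α) * Real.exp (u ((2:ℝ)^(k+1))) := by rw [ht4]
      have hρlog : Real.log ρ = k * L := by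
        rw [hρ, Real.log_pow]; try push_cast; try ring
      have hpow4 : ρ^(4:ℕ) * ρ^α = Real.exp (γ * k * L) := by
        have h4' : (ρ:ℝ)^(4:ℕ) = ρ^((4:ℕ):ℝ) := (Real.rpow_natCast ρ 4).symm
        rw [h4', ← Real.rpow_add hρpos]
        rw [Real.rpow_def_of_pos hρpos, hρlog, hγ, Real.exp_eq_exp]
        push_cast
        ring
      have heq : c * klo α / 16 * (ρ^4 * ρ^α) * Real.exp (u ((2:ℝ)^(k+1)))
          = c' * Real.exp (u ((2:ℝ)^(k+1)) + γ*((k:ℝ)+1)*L) := by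
        have harg : γ*(k:ℝ)*L + u ((2:ℝ)^(k+1))
            = -(γ*L) + (u ((2:ℝ)^(k+1)) + γ*((k:ℝ)+1)*L) := by ring
        have hcomb : ∀ a b e : ℝ, a * Real.exp b * Real.exp e = a * Real.exp (b+e) :=
          fun a b e => by rw [mul_assoc, ← Real.exp_add]
        rw [hpow4, hc', hcomb, hcomb, harg]
      push_cast
      set x := u ((2:ℝ)^(k+1)) + γ*((k:ℝ)+1)*L with hx
      have hmain : x ≤ (u ρ + γ*(k:ℝ)*L) + γ*L - c' * Real.exp x := by
        have h1 : u ((2:ℝ)^(k+1)) ≤ u ρ - c' * Real.exp x := by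
          rw [← heq]; linarith
        rw [hx]; linarith
      have hγL : 0 < γ * L := mul_pos hγpos hLpos
      rcases le_or_gt (γ*L) (c' * Real.exp x) with hcase | hcase
      · linarith
      · have hexpx : Real.exp x < γ*L/c' := by
          rw [lt_div_iff₀ hc'pos]; linarith
        have hlt : x < Real.log (γ*L/c') := by
          rw [← Real.exp_lt_exp]
          calc Real.exp x < γ*L/c' := hexpx
            _ = Real.exp (Real.log (γ*L/c')) := (Real.exp_log (by positivity)).symm
        have habs := le_abs_self (Real.log (γ*L/c'))
        calc x ≤ Real.log (γ*L/c') := hlt.le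
          _ ≤ |Real.log (γ*L/c')| := habs
          _ ≤ D := by rw [hD]; linarith
  -- conclude
  rcases le_or_gt 1 r with hr1 | hr1
  · set k := Nat.floor (Real.logb 2 r) with hk
    have hlogb : 0 ≤ Real.logb 2 r := Real.logb_nonneg one_lt_two hr1
    have h1 : (k:ℝ) ≤ Real.logb 2 r := Nat.floor_le hlogb
    have h2k : (2:ℝ)^k ≤ r := by
      calc (2:ℝ)^k = (2:ℝ)^((k:ℕ):ℝ) := (Real.rpow_natCast 2 k).symm
        _ ≤ (2:ℝ)^(Real.logb 2 r) := Real.rpow_le_rpow_of_exponent_le one_le_two h1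
        _ = r := Real.rpow_logb two_pos (by norm_num) hr
    have hklog : Real.log r < (k+1)*L := by
      have h2 : Real.logb 2 r < k+1 := Nat.lt_floor_add_one _
      rw [Real.logb, div_lt_iff₀ hLpos] at h2
      linarith
    have hur : u r ≤ u ((2:ℝ)^k) :=
      hu (mem_Ici.2 (by positivity)) (mem_Ici.2 (by linarith)) h2k
    have hdk := hd k
    have : -(γ*(k+1)*L) < -(γ * Real.log r) := by
      have := mul_lt_mul_of_pos_left hklog hγpos
      linarith
    calc u r ≤ u ((2:ℝ)^k) := hur
      _ ≤ D - γ*k*L := by linarith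
      _ ≤ -(4+α) * Real.log r + (γ*L + D + 1) := by
          simp only [← hγ]
          nlinarith
  · have hur : u r ≤ 0 := by
      have := hu (mem_Ici.2 le_rfl) (mem_Ici.2 hr.le) hr.le
      rw [h0] at this; exact this
    have hlog : Real.log r < 0 := Real.log_neg hr hr1
    nlinarith [mul_pos hγpos (neg_pos.2 hlog)]

section case2
variable {N : ℕ} {α : ℝ} {u v : ℝ → ℝ}

set_option maxHeartbeats 4000000 in
private lemma case2_absurd (hN : 3 ≤ N) (hα : -2 < α)
    (hw' : ∀ x ∈ Ioi (0:ℝ), HasDerivAt (fun y => y^(N-1) * deriv v y) (x^(N-1) * (x^α * Real.exp (u x))) x)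
    (hm' : ∀ x ∈ Ioi (0:ℝ), HasDerivAt (fun y => y^(N-1) * deriv u y) (x^(N-1) * v x) x)
    (hdv : ∀ x ∈ Ioi (0:ℝ), HasDerivAt v (deriv v x) x)
    (hdu : ∀ x ∈ Ioi (0:ℝ), HasDerivAt u (deriv u x) x)
    (hw0 : ∀ x > (0:ℝ), 0 ≤ x^(N-1) * deriv v x)
    (hucont : ContinuousOn u (Ici 0))
    (hducont : ContinuousOn (deriv u) (Ioi 0))
    {r₁ : ℝ} (hr₁ : 0 < r₁) (hv₁ : 0 < v r₁) : False := by
  have hNR : (0:ℝ) < N := by positivity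
  set δ := v r₁ with hδ
  -- v is monotone on Ici 0? we only need on Ioi 0
  have hdvpos : ∀ x ∈ Ioi (0:ℝ), 0 ≤ deriv v x := by
    intro x hx
    have h := hw0 x hx
    have hxp : (0:ℝ) < x^(N-1) := pow_pos hx _
    nlinarith
  have hvmono : MonotoneOn v (Ioi 0) := my_monoOn' hdv hdvpos
  have hvge : ∀ t, r₁ ≤ t → δ ≤ v t := fun t ht =>
    hvmono (mem_Ioi.2 hr₁) (mem_Ioi.2 (lt_of_lt_of_le hr₁ ht)) ht
  -- growth of m
  have hgder : ∀ s ∈ Ioi r₁, HasDerivAt (fun s => s^(N-1) * deriv u s - δ/N * s^N)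
      (s^(N-1) * v s - δ/N * (N * s^(N-1))) s := by
    intro s hs
    have hs0 : (0:ℝ) < s := lt_trans hr₁ hs
    exact (hm' s hs0).sub ((hasDerivAt_pow N s).const_mul (δ/N))
  have hgmono : MonotoneOn (fun s => s^(N-1) * deriv u s - δ/N * s^N) (Ici r₁) := by
    refine my_monoOn ?_ hgder ?_
    · refine ContinuousOn.sub (ContinuousOn.mul ?_ ?_) (Continuous.continuousOn (by continuity))
      · exact (continuous_pow (N-1)).continuousOn
      · exact hducont.mono (fun x hx => lt_of_lt_of_le hr₁ hx)
    · intro s hs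
      have hs0 : (0:ℝ) < s := lt_trans hr₁ hs
      have h1 : δ ≤ v s := hvge s hs.le
      have h2 : (0:ℝ) < s^(N-1) := pow_pos hs0 _
      have h3 : δ/N * (N * s^(N-1)) = δ * s^(N-1) := by field_simp
      rw [h3]
      nlinarith
  have hmgrow : ∀ t, r₁ ≤ t →
      r₁^(N-1) * deriv u r₁ - δ/N * r₁^N + δ/N * t^N ≤ t^(N-1) * deriv u t := by
    intro t ht
    have := hgmono self_mem_Ici (mem_Ici.2 ht) ht
    simp only at this
    linarith
  -- r₂ and positivity of deriv u beyond r₂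
  set X := |r₁^(N-1) * deriv u r₁| + δ/N * r₁^N with hX
  have hδpos : 0 < δ := hv₁
  have hXpos : 0 ≤ X := by
    have := abs_nonneg (r₁^(N-1) * deriv u r₁)
    have : (0:ℝ) < δ/N * r₁^N := by positivity
    positivity
  set r₂ := max (r₁+1) (max 1 (2*N*(X+1)/δ)) with hr₂def
  have hr₂1 : (1:ℝ) ≤ r₂ := le_trans (le_max_left _ _) (le_max_right _ _)
  have hr₂r₁ : r₁ < r₂ := lt_of_lt_of_le (by linarith) (le_max_left _ _)
  have hr₂0 : (0:ℝ) < r₂ := by linarith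
  have hdu_lb : ∀ t, r₂ ≤ t → δ*t/(2*N) ≤ deriv u t := by
    intro t ht
    have ht1 : (1:ℝ) ≤ t := le_trans hr₂1 ht
    have ht0 : (0:ℝ) < t := by linarith
    have htX : 2*N*(X+1)/δ ≤ t := le_trans (le_trans (le_max_right _ _) (le_max_right _ _)) ht
    have htN : t ≤ t^N := le_self_pow₀ ht1 (by omega)
    have h1 := hmgrow t (le_trans hr₂r₁.le ht)
    have h2 : -X ≤ r₁^(N-1) * deriv u r₁ - δ/N * r₁^N := by
      have := neg_abs_le (r₁^(N-1) * deriv u r₁)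
      rw [hX]; linarith
    -- δ/N * t^N - X ≥ δ/(2N) * t^N  since δ t^N/(2N) ≥ X+1
    have h3 : X + 1 ≤ δ/(2*N) * t^N := by
      have h4 : 2*N*(X+1)/δ ≤ t^N := le_trans htX htN
      have h5 : δ/(2*N) * (2*N*(X+1)/δ) ≤ δ/(2*N) * t^N :=
        mul_le_mul_of_nonneg_left h4 (by positivity)
      have h6 : δ/(2*N) * (2*N*(X+1)/δ) = X + 1 := by field_simp
      linarith
    have h7 : δ/(2*N) * t^N ≤ t^(N-1) * deriv u t := by
      have : δ/N * t^N = δ/(2*N) * t^N + δ/(2*N) * t^N := by ring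
      nlinarith
    -- divide by t^{N-1}
    have htpow : (0:ℝ) < t^(N-1) := pow_pos ht0 _
    have htN' : t^N = t^(N-1) * t := by rw [← pow_succ]; congr 1; omega
    rw [htN'] at h7
    have : δ/(2*N) * (t^(N-1) * t) = t^(N-1) * (δ*t/(2*N)) := by ring
    rw [this] at h7
    exact le_of_mul_le_mul_left h7 htpow
  have hdu_nn : ∀ x ∈ Ioi r₂, 0 ≤ deriv u x := by
    intro x hx
    have := hdu_lb x (le_of_lt hx)
    have hx0 : (0:ℝ) < x := lt_trans hr₂0 hx
    have : (0:ℝ) ≤ δ*x/(2*N) := by positivity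
    linarith [hdu_lb x (le_of_lt hx)]
  have humono : MonotoneOn u (Ici r₂) :=
    my_monoOn (hucont.mono (fun x hx => le_trans hr₂0.le hx)) (fun x hx => hdu x (lt_trans hr₂0 hx)) hdu_nn
  -- quadratic growth of u
  have hquad : ∀ t, r₂ ≤ t → u r₂ + δ/(4*N) * (t^2 - r₂^2) ≤ u t := by
    intro t ht
    have hGmono : MonotoneOn (fun s => u s - δ/(4*N) * s^2) (Ici r₂) := by
      refine my_monoOn ?_ (fun s hs => (hdu s (lt_trans hr₂0 hs)).sub
        (((hasDerivAt_pow 2 s).const_mul (δ/(4*N))))) ?_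
      · exact ContinuousOn.sub (hucont.mono (fun x hx => le_trans hr₂0.le hx))
          (Continuous.continuousOn (by continuity))
      · intro s hs
        have hs2 : r₂ ≤ s := le_of_lt hs
        have h1 := hdu_lb s hs2
        have hs0 : (0:ℝ) < s := lt_trans hr₂0 hs
        have : δ/(4*N) * ((2:ℕ) * s^(2-1)) = δ*s/(2*N) := by
          push_cast; field_simp; ring
        rw [this]
        linarith
    have := hGmono self_mem_Ici (mem_Ici.2 ht) ht
    simp only at this
    linarith
  -- the step constant
  set c₆ := klo α * (((2:ℝ)^(N-1))^2)⁻¹ / 256 with hc₆def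
  have hc₆ : 0 < c₆ := by have := klo_pos α; positivity
  have hwmono : MonotoneOn (fun y => y^(N-1) * deriv v y) (Ioi 0) :=
    my_monoOn' hw' (fun x hx => by have : (0:ℝ) < x := hx; positivity)
  have hmmono : MonotoneOn (fun y => y^(N-1) * deriv u y) (Ici r₂) := by
    refine my_monoOn ?_ (fun x hx => hm' x (lt_trans hr₂0 hx)) ?_
    · refine ContinuousOn.mul ((continuous_pow (N-1)).continuousOn) (hducont.mono ?_)
      exact fun x hx => lt_of_lt_of_le hr₂0 hx
    · intro x hx
      have hx0 : (0:ℝ) < x := lt_trans hr₂0 hx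
      have h1 : δ ≤ v x := hvge x (le_trans hr₂r₁.le (le_of_lt hx))
      have h2 : (0:ℝ) ≤ x^(N-1) := (pow_pos hx0 _).le
      nlinarith
  -- THE STEP
  have hstep : ∀ R, r₂ ≤ R → (1:ℝ) ≤ R → ∀ η, 0 < η → η ≤ 1 →
      u R + c₆ * η^4 * (R^4 * R^α) * Real.exp (u R) ≤ u (R*(1+η)) := by
    intro R hRr₂ hR1 η hη0 hη1
    set h := η*R/4 with hhdef
    have hR0 : (0:ℝ) < R := by linarith
    have hh0 : 0 < h := by rw [hhdef]; positivity
    have hh4 : R + 4*h = R*(1+η) := by rw [hhdef]; ring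
    have hhR : 4*h ≤ R := by
      rw [hhdef]
      have := mul_le_mul_of_nonneg_right hη1 hR0.le
      nlinarith
    have hmemIoi : ∀ x, R ≤ x → x ∈ Ioi (0:ℝ) := fun x hx => lt_of_lt_of_le hR0 hx
    set P := (2*R)^(N-1) with hPdef
    have hP : 0 < P := by rw [hPdef]; positivity
    set K₁ := R^(N-1) * (klo α * R^α) * Real.exp (u R) with hK₁def
    have hK₁pos : 0 < K₁ := by
      have := klo_pos α
      rw [hK₁def]; positivity
    -- e1
    have h_e1 : K₁ * (R+h - R) ≤ (fun y => y^(N-1) * deriv v y) (R+h) - (fun y => y^(N-1) * deriv v y) R := by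
      refine my_incr (by linarith) (fun x hx => hw' x (hmemIoi x hx.1)) ?_
      rintro x ⟨hx1, hx2⟩
      have hx0 : 0 < x := lt_of_lt_of_le hR0 hx1
      have hx2R : x ≤ 2*R := by linarith
      have ha : R^(N-1) ≤ x^(N-1) := pow_le_pow_left₀ hR0.le hx1 _
      have hb : klo α * R^α ≤ x^α := (rpow_pair hR0 hx1 hx2R).1
      have hc : Real.exp (u R) ≤ Real.exp (u x) :=
        Real.exp_le_exp.2 (humono (mem_Ici.2 hRr₂) (mem_Ici.2 (le_trans hRr₂ hx1)) hx1)
      calc K₁ = R^(N-1) * (klo α * R^α) * Real.exp (u R) := rfl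
        _ ≤ x^(N-1) * x^α * Real.exp (u x) := by
            have := klo_pos α
            refine mul3_le ha hb hc ?_ ?_ ?_ <;> positivity
        _ = x^(N-1) * (x^α * Real.exp (u x)) := by ring
    have hwRh : K₁ * h ≤ (R+h)^(N-1) * deriv v (R+h) := by
      have h0' := hw0 R hR0
      have he : R + h - R = h := by ring
      rw [he] at h_e1
      simp only at h_e1
      linarith
    -- e2
    set K₂ := K₁ * h / P with hK₂def
    have hK₂pos : 0 < K₂ := by rw [hK₂def]; positivity
    have h_e2 : ∀ x ∈ Icc (R+h) (R+2*h), K₂ ≤ deriv v x := by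
      rintro x ⟨hx1, hx2⟩
      have hx0 : 0 < x := by linarith
      have hxw : (R+h)^(N-1) * deriv v (R+h) ≤ x^(N-1) * deriv v x :=
        hwmono (mem_Ioi.2 (by linarith)) (mem_Ioi.2 hx0) hx1
      have hdvx : 0 ≤ deriv v x := hdvpos x (mem_Ioi.2 hx0)
      have hxP : x^(N-1) ≤ P := by
        rw [hPdef]; exact pow_le_pow_left₀ hx0.le (by linarith) _
      rw [hK₂def, div_le_iff₀ hP]
      calc K₁ * h ≤ x^(N-1) * deriv v x := le_trans hwRh hxw
        _ ≤ P * deriv v x := mul_le_mul_of_nonneg_right hxP hdvx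
        _ = deriv v x * P := by ring
    -- e3
    have h_e3 : K₂ * (R+2*h - (R+h)) ≤ v (R+2*h) - v (R+h) :=
      my_incr (by linarith) (fun x hx => hdv x (hmemIoi x (by linarith [hx.1]))) h_e2
    have hvR2h : K₂ * h ≤ v (R+2*h) := by
      have hvRh : 0 ≤ v (R+h) := le_trans hδpos.le (hvge (R+h) (by linarith [hr₂r₁.le, hRr₂]))
      have he : R + 2*h - (R+h) = h := by ring
      rw [he] at h_e3
      linarith
    -- e4
    set K₃ := R^(N-1) * (K₂*h) with hK₃def
    have h_e4 : ∀ x ∈ Icc (R+2*h) (R+3*h), K₃ ≤ x^(N-1) * v x := by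
      rintro x ⟨hx1, hx2⟩
      have hx0 : 0 < x := by linarith
      have hvx : K₂ * h ≤ v x :=
        le_trans hvR2h (hvmono (mem_Ioi.2 (by linarith)) (mem_Ioi.2 hx0) hx1)
      have ha : R^(N-1) ≤ x^(N-1) := pow_le_pow_left₀ hR0.le (by linarith) _
      rw [hK₃def]
      exact mul_le_mul ha hvx (by positivity) (pow_nonneg hx0.le _)
    have h_e4' : K₃ * (R+3*h - (R+2*h)) ≤ (fun y => y^(N-1) * deriv u y) (R+3*h) - (fun y => y^(N-1) * deriv u y) (R+2*h) :=
      my_incr (by linarith) (fun x hx => hm' x (hmemIoi x (by linarith [hx.1]))) h_e4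
    have hmR3h : K₃ * h ≤ (R+3*h)^(N-1) * deriv u (R+3*h) := by
      have hm2h : 0 ≤ (R+2*h)^(N-1) * deriv u (R+2*h) := by
        have hd := hdu_lb (R+2*h) (by linarith)
        have : (0:ℝ) ≤ δ*(R+2*h)/(2*N) := by positivity
        have : (0:ℝ) ≤ deriv u (R+2*h) := by linarith
        positivity
      have he : R + 3*h - (R+2*h) = h := by ring
      rw [he] at h_e4'
      simp only at h_e4'
      linarith
    -- e5
    set K₄ := K₃ * h / P with hK₄def
    have h_e5 : ∀ x ∈ Icc (R+3*h) (R+4*h), K₄ ≤ deriv u x := by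
      rintro x ⟨hx1, hx2⟩
      have hx0 : 0 < x := by linarith
      have hxm : (R+3*h)^(N-1) * deriv u (R+3*h) ≤ x^(N-1) * deriv u x :=
        hmmono (mem_Ici.2 (by linarith)) (mem_Ici.2 (by linarith)) hx1
      have hdux : 0 ≤ deriv u x := hdu_nn x (mem_Ioi.2 (by linarith))
      have hxP : x^(N-1) ≤ P := by
        rw [hPdef]; exact pow_le_pow_left₀ hx0.le (by linarith) _
      rw [hK₄def, div_le_iff₀ hP]
      calc K₃ * h ≤ x^(N-1) * deriv u x := le_trans hmR3h hxm
        _ ≤ P * deriv u x := mul_le_mul_of_nonneg_right hxP hdux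
        _ = deriv u x * P := by ring
    have h_e6 : K₄ * (R+4*h - (R+3*h)) ≤ u (R+4*h) - u (R+3*h) :=
      my_incr (by linarith) (fun x hx => hdu x (hmemIoi x (by linarith [hx.1]))) h_e5
    have huR3h : u R ≤ u (R+3*h) :=
      humono (mem_Ici.2 hRr₂) (mem_Ici.2 (by linarith)) (by linarith)
    -- final algebra
    have hfin : K₄ * h = c₆ * η^4 * (R^4 * R^α) * Real.exp (u R) := by
      have hP2 : P = (2:ℝ)^(N-1) * R^(N-1) := by rw [hPdef, mul_pow]
      have h2p : (0:ℝ) < (2:ℝ)^(N-1) := by positivity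
      have hRp : (0:ℝ) < R^(N-1) := by positivity
      rw [hK₄def, hK₃def, hK₂def, hK₁def, hP2, hc₆def, hhdef]
      field_simp
      ring
    have he : R + 4*h - (R+3*h) = h := by ring
    rw [he] at h_e6
    rw [← hh4]
    linarith [hfin]
  -- choose M and r₃
  set q := Real.exp (-(1/8 : ℝ)) with hqdef
  have hq0 : 0 < q := Real.exp_pos _
  have hq1 : q < 1 := by
    rw [hqdef, ← Real.exp_zero]
    exact Real.exp_lt_exp.2 (by norm_num)
  set M := max (2*|Real.log c₆|) (8*|Real.log (1 - q)|) with hMdef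
  have hM0 : 0 ≤ M := le_trans (by positivity) (le_max_left _ _)
  have hMa : 1 ≤ c₆ * Real.exp (M/2) := by
    have h1 : -Real.log c₆ ≤ M/2 := by
      have := le_max_left (2*|Real.log c₆|) (8*|Real.log (1 - q)|)
      have habs := neg_abs_le (Real.log c₆)
      rw [hMdef]; linarith [le_abs_self (Real.log c₆)]
    have h2 : Real.exp (-Real.log c₆) ≤ Real.exp (M/2) := Real.exp_le_exp.2 h1
    rw [Real.exp_neg, Real.exp_log hc₆] at h2
    calc (1:ℝ) = c₆ * c₆⁻¹ := by field_simp
      _ ≤ c₆ * Real.exp (M/2) := mul_le_mul_of_nonneg_left h2 hc₆.le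
  have hMb : Real.exp (-(M/8)) ≤ 1 - q := by
    have h1q : 0 < 1 - q := by linarith
    have h1 : -(M/8) ≤ Real.log (1-q) := by
      have := le_max_right (2*|Real.log c₆|) (8*|Real.log (1 - q)|)
      have habs := neg_abs_le (Real.log (1-q))
      rw [hMdef]
      have h8 : 8*|Real.log (1-q)| ≤ M := le_max_right _ _
      linarith
    calc Real.exp (-(M/8)) ≤ Real.exp (Real.log (1-q)) := Real.exp_le_exp.2 h1
      _ = 1 - q := Real.exp_log h1q
  set T := Real.sqrt (r₂^2 + 4*N*(M + |u r₂| + 1)/δ) with hTdef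
  have hargnn : 0 ≤ r₂^2 + 4*N*(M + |u r₂| + 1)/δ := by positivity
  have hTsq : T^2 = r₂^2 + 4*N*(M + |u r₂| + 1)/δ := Real.sq_sqrt hargnn
  have hTr₂ : r₂ ≤ T := by
    rw [hTdef]
    calc r₂ = Real.sqrt (r₂^2) := (Real.sqrt_sq hr₂0.le).symm
      _ ≤ _ := Real.sqrt_le_sqrt (by
            have : (0:ℝ) ≤ 4*N*(M + |u r₂| + 1)/δ := by positivity
            linarith)
  have hT1 : (1:ℝ) ≤ T := le_trans hr₂1 hTr₂
  have huT : M + 1 ≤ u T := by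
    have h1 := hquad T hTr₂
    have h2 : δ/(4*N) * (T^2 - r₂^2) = M + |u r₂| + 1 := by
      rw [hTsq]
      field_simp
      ring
    have h3 := neg_abs_le (u r₂)
    rw [h2] at h1
    linarith
  -- the recursion
  set ηf : ℝ → ℝ := fun R => min 1 (Real.exp (-(u R)/8)) with hηfdef
  set Rk : ℕ → ℝ := fun k => Nat.rec T (fun _ R => R * (1 + ηf R)) k with hRkdef
  have hRksucc : ∀ k, Rk (k+1) = Rk k * (1 + ηf (Rk k)) := fun k => rfl
  have hRk0 : Rk 0 = T := rfl
  set ε := Real.exp (-(M/8)) with hεdef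
  have hε0 : 0 < ε := Real.exp_pos _
  have hsumq : ∀ k : ℕ, (∑ j ∈ Finset.range k, q^j) ≤ (1-q)⁻¹ := by
    intro k
    have hq1' : q - 1 < 0 := by linarith
    rw [geom_sum_eq hq1.ne, div_le_iff_of_neg hq1']
    have hne : (1:ℝ) - q ≠ 0 := by linarith
    have heq : (1-q)⁻¹ * (q-1) = -1 := by
      rw [inv_mul_eq_div, div_eq_iff hne]; ring
    rw [heq]
    nlinarith [pow_nonneg hq0.le k]
  have hinv : ∀ k : ℕ, T ≤ Rk k ∧
      Rk k ≤ T * Real.exp (ε * ∑ j ∈ Finset.range k, q^j) ∧ M + k ≤ u (Rk k) := by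
    intro k
    induction k with
    | zero =>
      refine ⟨le_rfl, ?_, by push_cast; simp only [hRk0]; linarith⟩
      simp [hRk0]
    | succ k ih =>
      obtain ⟨h1, h2, h3⟩ := ih
      have hR1 : (1:ℝ) ≤ Rk k := le_trans hT1 h1
      have hR0 : (0:ℝ) < Rk k := by linarith
      have hkR : (0:ℝ) ≤ (k:ℝ) := by positivity
      have huR0 : 0 ≤ u (Rk k) := by linarith
      have hηle : Real.exp (-(u (Rk k))/8) ≤ 1 := by
        rw [← Real.exp_zero]
        exact Real.exp_le_exp.2 (by linarith)
      have hηeq : ηf (Rk k) = Real.exp (-(u (Rk k))/8) := by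
        rw [hηfdef]
        exact min_eq_right hηle
      have hη0 : 0 < ηf (Rk k) := by rw [hηeq]; exact Real.exp_pos _
      have hη1 : ηf (Rk k) ≤ 1 := min_le_left _ _
      have hstepk := hstep (Rk k) (le_trans hTr₂ h1) hR1 (ηf (Rk k)) hη0 hη1
      have hRα : (1:ℝ) ≤ (Rk k)^4 * (Rk k)^α := by
        have h4 : ((Rk k):ℝ)^(4:ℕ) = (Rk k)^((4:ℕ):ℝ) := (Real.rpow_natCast _ 4).symm
        rw [h4, ← Real.rpow_add hR0]
        calc (1:ℝ) = (Rk k)^(0:ℝ) := (Real.rpow_zero _).symm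
          _ ≤ (Rk k)^(((4:ℕ):ℝ)+α) := Real.rpow_le_rpow_of_exponent_le hR1 (by push_cast; linarith)
      have hη4 : (ηf (Rk k))^4 * Real.exp (u (Rk k)) = Real.exp (u (Rk k)/2) := by
        rw [hηeq, ← Real.exp_nat_mul, ← Real.exp_add]
        congr 1
        push_cast
        ring
      have hgain : 1 ≤ c₆ * (ηf (Rk k))^4 * ((Rk k)^4 * (Rk k)^α) * Real.exp (u (Rk k)) := by
        have hM2 : Real.exp (M/2) ≤ Real.exp (u (Rk k)/2) :=
          Real.exp_le_exp.2 (by linarith)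
        have h5 : 1 ≤ c₆ * Real.exp (u (Rk k)/2) := by nlinarith
        have h6 : c₆ * Real.exp (u (Rk k)/2) = c₆ * (ηf (Rk k))^4 * Real.exp (u (Rk k)) := by
          rw [← hη4]; ring
        have h7 : (0:ℝ) < c₆ * (ηf (Rk k))^4 * Real.exp (u (Rk k)) := by positivity
        calc (1:ℝ) ≤ c₆ * (ηf (Rk k))^4 * Real.exp (u (Rk k)) := by rw [← h6]; exact h5
          _ = (c₆ * (ηf (Rk k))^4 * Real.exp (u (Rk k))) * 1 := by ring
          _ ≤ (c₆ * (ηf (Rk k))^4 * Real.exp (u (Rk k))) * ((Rk k)^4 * (Rk k)^α) :=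
              mul_le_mul_of_nonneg_left hRα h7.le
          _ = c₆ * (ηf (Rk k))^4 * ((Rk k)^4 * (Rk k)^α) * Real.exp (u (Rk k)) := by ring
      have hηεq : ηf (Rk k) ≤ ε * q^k := by
        have heq2 : ε * q^k = Real.exp (-((M+k)/8)) := by
          rw [hεdef, hqdef, ← Real.exp_nat_mul, ← Real.exp_add]
          congr 1
          push_cast
          ring
        rw [hηeq, heq2]
        exact Real.exp_le_exp.2 (by linarith)
      have h1pη : 1 + ηf (Rk k) ≤ Real.exp (ε * q^k) := by
        have ha := Real.add_one_le_exp (ηf (Rk k))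
        have hb : Real.exp (ηf (Rk k)) ≤ Real.exp (ε * q^k) := Real.exp_le_exp.2 hηεq
        linarith
      refine ⟨?_, ?_, ?_⟩
      · rw [hRksucc]
        have : Rk k ≤ Rk k * (1 + ηf (Rk k)) := le_mul_of_one_le_right hR0.le (by linarith)
        linarith
      · rw [hRksucc, Finset.sum_range_succ]
        calc Rk k * (1 + ηf (Rk k))
            ≤ (T * Real.exp (ε * ∑ j ∈ Finset.range k, q^j)) * Real.exp (ε * q^k) :=
              mul_le_mul h2 h1pη (by linarith) (by positivity)
          _ = T * Real.exp (ε * (∑ j ∈ Finset.range k, q^j) + ε * q^k) := by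
              rw [mul_assoc, ← Real.exp_add]
          _ = T * Real.exp (ε * ((∑ j ∈ Finset.range k, q^j) + q^k)) := by
              congr 1
              congr 1
              ring
      · rw [hRksucc]
        push_cast
        linarith [hstepk, hgain, h3]
  -- conclusion
  have h1q : 0 < 1 - q := by linarith
  have hRstar : ∀ k, Rk k ≤ T * Real.exp 1 := by
    intro k
    obtain ⟨h1, h2, h3⟩ := hinv k
    have hsq := hsumq k
    have hsnn : (0:ℝ) ≤ ∑ j ∈ Finset.range k, q^j :=
      Finset.sum_nonneg (fun j _ => pow_nonneg hq0.le j)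
    have hεS : ε * (∑ j ∈ Finset.range k, q^j) ≤ 1 := by
      calc ε * (∑ j ∈ Finset.range k, q^j) ≤ (1-q) * (1-q)⁻¹ :=
            mul_le_mul hMb hsq hsnn h1q.le
        _ = 1 := by field_simp
    calc Rk k ≤ T * Real.exp (ε * ∑ j ∈ Finset.range k, q^j) := h2
      _ ≤ T * Real.exp 1 := by
          have := Real.exp_le_exp.2 hεS
          have hT0 : (0:ℝ) ≤ T := by linarith
          exact mul_le_mul_of_nonneg_left this hT0
  have hTe : T ≤ T * Real.exp 1 := by
    have h1e : (1:ℝ) ≤ Real.exp 1 := by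
      rw [← Real.exp_zero]; exact Real.exp_le_exp.2 (by norm_num)
    exact le_mul_of_one_le_right (by linarith) h1e
  have humax : ∀ k : ℕ, M + k ≤ u (T * Real.exp 1) := by
    intro k
    obtain ⟨h1, h2, h3⟩ := hinv k
    refine le_trans h3 (humono ?_ ?_ (hRstar k))
    · exact mem_Ici.2 (le_trans hTr₂ h1)
    · exact mem_Ici.2 (le_trans hTr₂ hTe)
  obtain ⟨n, hn⟩ := exists_nat_gt (u (T * Real.exp 1) - M)
  linarith [humax n]

end case2

/-- Uniform logarithmic upper bound (Lemma 3.3): for `N ≥ 3`, `α > -2`, there is a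
constant `C = C(N, α) > 0` such that every entire radial solution satisfies
`u(r) ≤ -(4+α) ln r + C` for all `r > 0`. -/
theorem uniform_log_upper_bound
    (N : ℕ) (hN : 3 ≤ N) (α : ℝ) (hα : -2 < α) :
    ∃ C > (0 : ℝ), ∀ u v : ℝ → ℝ, IsEntireRadialSolution N α u v →
      ∀ r : ℝ, 0 < r → u r ≤ -(4 + α) * Real.log r + C := by
  classical
  have hklo := klo_pos α
  have hcpos : 0 < klo α * 4 * (((4:ℝ)^(N-1))^2)⁻¹ := by positivity
  obtain ⟨C, hC, hDY⟩ := dyadic α (klo α * 4 * (((4:ℝ)^(N-1))^2)⁻¹) hα hcpos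
  refine ⟨C, hC, ?_⟩
  intro u v hsol r hr
  obtain ⟨hu2, hv2, hu0, hdu0, hdv0, odeu, odev⟩ := hsol
  obtain ⟨hduA, hdduA, hducont⟩ := deriv2 hu2
  obtain ⟨hdvA, hddvA, hdvcont⟩ := deriv2 hv2
  have htendu := deriv_tendsto hu2 hdu0
  have htendv := deriv_tendsto hv2 hdv0
  have hm' : ∀ x ∈ Ioi (0:ℝ), HasDerivAt (fun y => y^(N-1) * deriv u y) (x^(N-1) * v x) x :=
    fun x hx => hasDerivAt_m hN hdduA odeu hx
  have hw' : ∀ x ∈ Ioi (0:ℝ), HasDerivAt (fun y => y^(N-1) * deriv v y) (x^(N-1) * (x^α * Real.exp (u x))) x :=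
    fun x hx => hasDerivAt_m hN hddvA odev hx
  have hw0 : ∀ x > (0:ℝ), 0 ≤ x^(N-1) * deriv v x := by
    refine m_nonneg hw' (fun x hx => ?_) htendv
    have hx0 : (0:ℝ) < x := hx
    positivity
  by_cases hcase : ∀ s, 0 < s → v s ≤ 0
  · -- Case 1
    have hm0 : ∀ x > (0:ℝ), x^(N-1) * deriv u x ≤ 0 := by
      refine m_nonpos hm' (fun x hx => ?_) htendu
      have hx0 : (0:ℝ) < x := hx
      exact mul_nonpos_of_nonneg_of_nonpos (pow_nonneg hx0.le _) (hcase x hx0)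
    have hu_anti : AntitoneOn u (Ici 0) := by
      refine my_antiOn hu2.continuousOn hduA (fun x hx => ?_)
      have hx0 : (0:ℝ) < x := hx
      have h1 := hm0 x hx0
      have h2 : (0:ℝ) < x^(N-1) := pow_pos hx0 _
      nlinarith
    refine hDY u hu_anti hu0 (fun t ht => ?_) r hr
    exact case1_key hN hu_anti hw' hm' hdvA hduA hw0 hm0 (fun x hx => hcase x hx) ht
  · push_neg at hcase
    obtain ⟨r₁, hr₁, hv₁⟩ := hcase
    exact absurd (case2_absurd hN hα hw' hm' hdvA hduA hw0 hu2.continuousOn hducont hr₁ hv₁) not_false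
end
end

section
/- Let N = 3, α > −2, and let (u, v) be an entire radial solution of Δ²u = |x|^α e^u normalized by u(0) = 0 such that lim_{r→∞} v(r) = 0 (equivalently, v(0) = β₀). Then the integrals A_k := ∫₀^∞ s^{k+α} e^{u(s)} ds are finite for k = 2, 3, 4, and there exist constants c > 0 and C > 0 such that for all r ≥ 1: |u(r) − a₁ r − a₂ − a₃/r| ≤ C e^{−c r}, where a₁ = −A₂/2, a₂ = A₃/2 and a₃ = −A₄/6. -/
open MeasureTheory Real Set Filter

noncomputable section

open Topology


-- generic tail integral lemmas
lemma tail_eq (φ : ℝ → ℝ) (hi : IntegrableOn φ (Ioi 0)) {x : ℝ} (hx : 0 ≤ x) :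
    ∫ t in Ioi x, φ t = (∫ t in Ioi 0, φ t) - ∫ t in (0:ℝ)..x, φ t := by
  rw [intervalIntegral.integral_of_le hx]
  have hsplit : (∫ t in Ioc 0 x, φ t) + ∫ t in Ioi x, φ t = ∫ t in Ioi 0, φ t := by
    rw [← setIntegral_union]
    · rw [Ioc_union_Ioi_eq_Ioi hx]
    · exact Ioc_disjoint_Ioi le_rfl
    · exact measurableSet_Ioi
    · exact hi.mono_set Ioc_subset_Ioi_self
    · exact hi.mono_set (fun t ht => lt_of_le_of_lt hx ht)
  linarith

lemma tail_hasDerivAt (φ : ℝ → ℝ) (hc : ContinuousOn φ (Ioi 0)) (hi : IntegrableOn φ (Ioi 0))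
    {r : ℝ} (hr : 0 < r) :
    HasDerivAt (fun x => ∫ t in Ioi x, φ t) (-(φ r)) r := by
  have hii : IntervalIntegrable φ volume 0 r :=
    (intervalIntegrable_iff_integrableOn_Ioc_of_le hr.le).2 (hi.mono_set Ioc_subset_Ioi_self)
  have hmeas : StronglyMeasurableAtFilter φ (𝓝 r) :=
    ⟨Ioi 0, Ioi_mem_nhds hr, hc.aestronglyMeasurable measurableSet_Ioi⟩
  have hcont : ContinuousAt φ r := hc.continuousAt (Ioi_mem_nhds hr)
  have key : HasDerivAt (fun x => (∫ t in Ioi 0, φ t) - ∫ t in (0:ℝ)..x, φ t) (-(φ r)) r :=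
    (intervalIntegral.integral_hasDerivAt_right hii hmeas hcont).const_sub _
  refine key.congr_of_eventuallyEq ?_
  filter_upwards [Ioi_mem_nhds hr] with x hx
  rw [tail_eq φ hi (le_of_lt hx)]

lemma tail_tendsto_atTop (φ : ℝ → ℝ) (hi : IntegrableOn φ (Ioi 0)) :
    Tendsto (fun x => ∫ t in Ioi x, φ t) atTop (𝓝 0) := by
  have h1 : Tendsto (fun x => ∫ t in (0:ℝ)..x, φ t) atTop (𝓝 (∫ t in Ioi 0, φ t)) :=
    MeasureTheory.intervalIntegral_tendsto_integral_Ioi 0 hi tendsto_id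
  have h2 : Tendsto (fun x => (∫ t in Ioi 0, φ t) - ∫ t in (0:ℝ)..x, φ t) atTop
      (𝓝 ((∫ t in Ioi 0, φ t) - ∫ t in Ioi 0, φ t)) := tendsto_const_nhds.sub h1
  rw [sub_self] at h2
  refine h2.congr' ?_
  filter_upwards [eventually_ge_atTop (0:ℝ)] with x hx
  rw [tail_eq φ hi hx]

lemma tail_tendsto_zero_right (φ : ℝ → ℝ) (hi : IntegrableOn φ (Ioi 0)) :
    Tendsto (fun x => ∫ t in Ioi x, φ t) (𝓝[>] (0:ℝ)) (𝓝 (∫ t in Ioi 0, φ t)) := by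
  have hImp : IntegrableOn φ (Icc 0 1) := by
    rw [integrableOn_Icc_iff_integrableOn_Ioc]
    exact hi.mono_set Ioc_subset_Ioi_self
  have hcont : ContinuousOn (fun x => ∫ t in Ioc 0 x, φ t) (Icc 0 1) :=
    intervalIntegral.continuousOn_primitive hImp
  have h0 : Tendsto (fun x => ∫ t in Ioc 0 x, φ t) (𝓝[Icc 0 1] 0) (𝓝 0) := by
    have := (hcont 0 (by constructor <;> norm_num))
    simpa [ContinuousWithinAt, Ioc_self] using this
  have h0' : Tendsto (fun x => ∫ t in Ioc 0 x, φ t) (𝓝[>] (0:ℝ)) (𝓝 0) := by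
    refine h0.mono_left ?_
    rw [← nhdsWithin_Ioc_eq_nhdsGT (zero_lt_one)]
    exact nhdsWithin_mono _ Ioc_subset_Icc_self
  have h2 : Tendsto (fun x => (∫ t in Ioi 0, φ t) - ∫ t in Ioc 0 x, φ t) (𝓝[>] (0:ℝ))
      (𝓝 ((∫ t in Ioi 0, φ t) - 0)) := tendsto_const_nhds.sub h0'
  rw [sub_zero] at h2
  refine h2.congr' ?_
  filter_upwards [self_mem_nhdsWithin] with x hx
  rw [tail_eq φ hi (le_of_lt hx), intervalIntegral.integral_of_le (le_of_lt hx)]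

lemma tail_nonneg (φ : ℝ → ℝ) (hφ : ∀ t ∈ Ioi (0:ℝ), 0 ≤ φ t) {x : ℝ} (hx : 0 ≤ x) :
    0 ≤ ∫ t in Ioi x, φ t :=
  setIntegral_nonneg measurableSet_Ioi (fun t ht => hφ t (lt_of_le_of_lt hx ht))

lemma tail_le_tail (φ : ℝ → ℝ) (hi : IntegrableOn φ (Ioi 0))
    (hφ : ∀ t ∈ Ioi (0:ℝ), 0 ≤ φ t) {x y : ℝ} (hx : 0 ≤ x) (hxy : x ≤ y) :
    ∫ t in Ioi y, φ t ≤ ∫ t in Ioi x, φ t := by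
  refine setIntegral_mono_set (hi.mono_set (Ioi_subset_Ioi hx)) ?_ ?_
  · filter_upwards [ae_restrict_mem measurableSet_Ioi] with t ht
    exact hφ t (lt_of_le_of_lt hx ht)
  · exact HasSubset.Subset.eventuallyLE (Ioi_subset_Ioi hxy)


lemma antitoneOn_Ici_of_hasDerivAt {f f' : ℝ → ℝ} {a : ℝ} (ha : 0 < a)
    (hf : ∀ x ∈ Ioi (0:ℝ), HasDerivAt f (f' x) x) (h0 : ∀ x ∈ Ioi a, f' x ≤ 0) :
    AntitoneOn f (Ici a) := by
  refine antitoneOn_of_deriv_nonpos (convex_Ici a) ?_ ?_ ?_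
  · exact fun x hx => ((hf x (lt_of_lt_of_le ha hx)).continuousAt).continuousWithinAt
  · intro x hx
    rw [interior_Ici] at hx
    exact ((hf x (ha.trans hx)).differentiableAt).differentiableWithinAt
  · intro x hx
    rw [interior_Ici] at hx
    rw [(hf x (ha.trans hx)).deriv]
    exact h0 x hx

lemma monotoneOn_Ici_of_hasDerivAt {f f' : ℝ → ℝ} {a : ℝ} (ha : 0 < a)
    (hf : ∀ x ∈ Ioi (0:ℝ), HasDerivAt f (f' x) x) (h0 : ∀ x ∈ Ioi a, 0 ≤ f' x) :
    MonotoneOn f (Ici a) := by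
  refine monotoneOn_of_deriv_nonneg (convex_Ici a) ?_ ?_ ?_
  · exact fun x hx => ((hf x (lt_of_lt_of_le ha hx)).continuousAt).continuousWithinAt
  · intro x hx
    rw [interior_Ici] at hx
    exact ((hf x (ha.trans hx)).differentiableAt).differentiableWithinAt
  · intro x hx
    rw [interior_Ici] at hx
    rw [(hf x (ha.trans hx)).deriv]
    exact h0 x hx

lemma strictMonoOn_Ici_of_hasDerivAt {f f' : ℝ → ℝ} {a : ℝ} (ha : 0 < a)
    (hf : ∀ x ∈ Ioi (0:ℝ), HasDerivAt f (f' x) x) (h0 : ∀ x ∈ Ioi a, 0 < f' x) :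
    StrictMonoOn f (Ici a) := by
  refine strictMonoOn_of_deriv_pos (convex_Ici a) ?_ ?_
  · exact fun x hx => ((hf x (lt_of_lt_of_le ha hx)).continuousAt).continuousWithinAt
  · intro x hx
    rw [interior_Ici] at hx
    rw [(hf x (ha.trans hx)).deriv]
    exact h0 x hx

lemma constOn_Ioi_of_hasDerivAt {f : ℝ → ℝ}
    (hf : ∀ x ∈ Ioi (0:ℝ), HasDerivAt f 0 x) {a b : ℝ} (ha : 0 < a) (hb : 0 < b) :
    f a = f b := by
  have hm : MonotoneOn f (Ioi 0) := by
    refine monotoneOn_of_deriv_nonneg (convex_Ioi 0) ?_ ?_ ?_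
    · exact fun x hx => ((hf x hx).continuousAt).continuousWithinAt
    · intro x hx
      rw [interior_Ioi] at hx
      exact ((hf x hx).differentiableAt).differentiableWithinAt
    · intro x hx
      rw [interior_Ioi] at hx
      rw [(hf x hx).deriv]
  have han : AntitoneOn f (Ioi 0) := by
    refine antitoneOn_of_deriv_nonpos (convex_Ioi 0) ?_ ?_ ?_
    · exact fun x hx => ((hf x hx).continuousAt).continuousWithinAt
    · intro x hx
      rw [interior_Ioi] at hx
      exact ((hf x hx).differentiableAt).differentiableWithinAt
    · intro x hx
      rw [interior_Ioi] at hx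
      rw [(hf x hx).deriv]
  rcases le_total a b with hab | hab
  · exact le_antisymm (hm ha hb hab) (han ha hb hab)
  · exact le_antisymm (han hb ha hab) (hm hb ha hab)


lemma integrable_rpow_exp_neg {p b : ℝ} (hp : -1 < p) (hb : 0 < b) :
    IntegrableOn (fun t : ℝ => t ^ p * Real.exp (-b * t)) (Ioi 0) := by
  have := integrableOn_rpow_mul_exp_neg_mul_rpow hp zero_lt_one hb
  refine this.congr_fun ?_ measurableSet_Ioi
  intro t ht
  simp [Real.rpow_one]

lemma continuousOn_rpow_exp (w : ℝ → ℝ) (hw : ContinuousOn w (Ioi 0)) (p : ℝ) :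
    ContinuousOn (fun t : ℝ => t ^ p * Real.exp (w t)) (Ioi 0) := by
  refine ContinuousOn.mul ?_ (Real.continuous_exp.comp_continuousOn hw)
  intro t ht
  exact (Real.continuousAt_rpow_const t p (Or.inl (ne_of_gt ht))).continuousWithinAt

lemma integrable_rpow_exp_decay {p b C₀ : ℝ} (hp : -1 < p) (hb : 0 < b)
    (w : ℝ → ℝ) (hw : ContinuousOn w (Ioi 0)) (hdecay : ∀ t ∈ Ioi (0:ℝ), w t ≤ C₀ - b * t) :
    IntegrableOn (fun t : ℝ => t ^ p * Real.exp (w t)) (Ioi 0) := by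
  have hmeas : AEStronglyMeasurable (fun t : ℝ => t ^ p * Real.exp (w t))
      (volume.restrict (Ioi 0)) :=
    (continuousOn_rpow_exp w hw p).aestronglyMeasurable measurableSet_Ioi
  have hgi : Integrable (fun t : ℝ => Real.exp C₀ * (t ^ p * Real.exp (-b * t)))
      (volume.restrict (Ioi 0)) := (integrable_rpow_exp_neg hp hb).const_mul _
  refine hgi.mono' hmeas ?_
  filter_upwards [ae_restrict_mem measurableSet_Ioi] with t ht
  have ht0 : (0:ℝ) < t := ht
  have h1 : Real.exp (w t) ≤ Real.exp (C₀ - b * t) := Real.exp_le_exp.2 (hdecay t ht)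
  have h2 : (0:ℝ) ≤ t ^ p := Real.rpow_nonneg ht0.le p
  rw [Real.norm_eq_abs, abs_of_nonneg (mul_nonneg h2 (Real.exp_pos _).le)]
  calc t ^ p * Real.exp (w t) ≤ t ^ p * Real.exp (C₀ - b * t) := by
        exact mul_le_mul_of_nonneg_left h1 h2
    _ = Real.exp C₀ * (t ^ p * Real.exp (-b * t)) := by
        rw [sub_eq_add_neg, Real.exp_add]; ring_nf


noncomputable section
namespace SepAux

/-- `W = (r v)'` candidate -/
def Wf (v : ℝ → ℝ) : ℝ → ℝ := fun x => v x + x * deriv v x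
/-- `P = (r u)'` candidate -/
def Pf (u : ℝ → ℝ) : ℝ → ℝ := fun x => u x + x * deriv u x
def Vf (v : ℝ → ℝ) : ℝ → ℝ := fun x => x * v x
def Uf (u : ℝ → ℝ) : ℝ → ℝ := fun x => x * u x
/-- integrand `t^(j+α) e^(u t)` -/
def ph (u : ℝ → ℝ) (α j : ℝ) : ℝ → ℝ := fun t => t ^ (j + α) * Real.exp (u t)
/-- tail moment -/
def Nt (u : ℝ → ℝ) (α j : ℝ) (r : ℝ) : ℝ := ∫ t in Ioi r, ph u α j t

variable {u v : ℝ → ℝ} {α : ℝ}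

lemma d1 (hv2 : ContDiffOn ℝ 2 v (Ici 0)) {r : ℝ} (hr : 0 < r) :
    HasDerivAt v (deriv v r) r := by
  have h := (hv2.mono Ioi_subset_Ici_self).differentiableOn (by norm_num)
  exact (h.differentiableAt (Ioi_mem_nhds hr)).hasDerivAt

lemma d2 (hv2 : ContDiffOn ℝ 2 v (Ici 0)) {r : ℝ} (hr : 0 < r) :
    HasDerivAt (deriv v) (deriv (deriv v) r) r := by
  have h := ((hv2.mono Ioi_subset_Ici_self).deriv_of_isOpen (m := 1) isOpen_Ioi
    (by norm_num)).differentiableOn one_ne_zero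
  exact (h.differentiableAt (Ioi_mem_nhds hr)).hasDerivAt

lemma wDeriv (hv2 : ContDiffOn ℝ 2 v (Ici 0))
    (odev : ∀ r > (0:ℝ), deriv (deriv v) r + 2 * deriv v r / r = r ^ α * Real.exp (u r))
    {r : ℝ} (hr : 0 < r) : HasDerivAt (Wf v) (ph u α 1 r) r := by
  have h := (d1 hv2 hr).add ((hasDerivAt_id' (x := r)).mul (d2 hv2 hr))
  have hode := odev r hr
  have h2 : deriv (deriv v) r = r ^ α * Real.exp (u r) - 2 * deriv v r / r := by linarith
  refine h.congr_deriv (Eq.symm ?_)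
  rw [h2, ph, Real.rpow_add hr, Real.rpow_one]
  field_simp
  ring

lemma pDeriv (hu2 : ContDiffOn ℝ 2 u (Ici 0))
    (odeu : ∀ r > (0:ℝ), deriv (deriv u) r + 2 * deriv u r / r = v r)
    {r : ℝ} (hr : 0 < r) : HasDerivAt (Pf u) (r * v r) r := by
  have h := (d1 hu2 hr).add ((hasDerivAt_id' (x := r)).mul (d2 hu2 hr))
  have hode := odeu r hr
  have h2 : deriv (deriv u) r = v r - 2 * deriv u r / r := by linarith
  refine h.congr_deriv (Eq.symm ?_)
  rw [h2]
  field_simp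
  ring

lemma vDeriv (hv2 : ContDiffOn ℝ 2 v (Ici 0)) {r : ℝ} (hr : 0 < r) :
    HasDerivAt (Vf v) (Wf v r) r := by
  have h := (hasDerivAt_id' (x := r)).mul (d1 hv2 hr)
  exact h.congr_deriv (by simp only [Wf]; ring)

lemma phCont (hu : ContinuousOn u (Ici 0)) (j : ℝ) : ContinuousOn (ph u α j) (Ioi 0) := by
  refine ContinuousOn.mul ?_
    (Real.continuous_exp.comp_continuousOn (hu.mono Ioi_subset_Ici_self))
  intro t ht
  exact (Real.continuousAt_rpow_const t (j + α) (Or.inl (ne_of_gt ht))).continuousWithinAt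

lemma phNonneg (j : ℝ) : ∀ t ∈ Ioi (0:ℝ), 0 ≤ ph u α j t := fun t ht =>
  mul_nonneg (Real.rpow_nonneg (le_of_lt ht) _) (Real.exp_pos _).le

end SepAux
end

noncomputable section
namespace SepAux
open scoped Topology
variable {u v : ℝ → ℝ} {α : ℝ} {C₀ m : ℝ}

lemma uDeriv (hu2 : ContDiffOn ℝ 2 u (Ici 0)) {r : ℝ} (hr : 0 < r) :
    HasDerivAt (Uf u) (Pf u r) r := by
  have h := (hasDerivAt_id' (x := r)).mul (d1 hu2 hr)
  exact h.congr_deriv (by simp only [Pf]; ring)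

/-- decay assumptions bundle -/
def Dec (u : ℝ → ℝ) (C₀ m : ℝ) : Prop :=
  0 < m ∧ ContinuousOn u (Ici 0) ∧ ∀ t ∈ Ioi (0:ℝ), u t ≤ C₀ - m * t

lemma phInt (hα : -2 < α) {j : ℝ} (hj : 1 ≤ j) (hd : Dec u C₀ m) :
    IntegrableOn (ph u α j) (Ioi 0) :=
  integrable_rpow_exp_decay (by linarith) hd.1 u (hd.2.1.mono Ioi_subset_Ici_self) hd.2.2

lemma ntDeriv (hα : -2 < α) {j : ℝ} (hj : 1 ≤ j) (hd : Dec u C₀ m) {r : ℝ} (hr : 0 < r) :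
    HasDerivAt (Nt u α j) (-(ph u α j r)) r :=
  tail_hasDerivAt _ (phCont hd.2.1 j) (phInt hα hj hd) hr

lemma ntNonneg (j : ℝ) {r : ℝ} (hr : 0 ≤ r) : 0 ≤ Nt u α j r :=
  tail_nonneg _ (phNonneg j) hr

lemma ntT0 (hα : -2 < α) {j : ℝ} (hj : 1 ≤ j) (hd : Dec u C₀ m) :
    Tendsto (Nt u α j) (𝓝[>] (0:ℝ)) (𝓝 (Nt u α j 0)) :=
  tail_tendsto_zero_right _ (phInt hα hj hd)

lemma ntTop (hα : -2 < α) {j : ℝ} (hj : 1 ≤ j) (hd : Dec u C₀ m) :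
    Tendsto (Nt u α j) atTop (𝓝 0) :=
  tail_tendsto_atTop _ (phInt hα hj hd)

lemma ntMono (hα : -2 < α) {j : ℝ} (hj : 1 ≤ j) (hd : Dec u C₀ m) {x y : ℝ}
    (hx : 0 ≤ x) (hxy : x ≤ y) : Nt u α j y ≤ Nt u α j x :=
  tail_le_tail _ (phInt hα hj hd) (phNonneg j) hx hxy

lemma phMul (j k : ℝ) {r : ℝ} (hr : 0 < r) : ph u α (j + k) r = r ^ k * ph u α j r := by
  unfold ph
  rw [show j + k + α = k + (j + α) by ring, Real.rpow_add hr]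
  ring

def Ef (u : ℝ → ℝ) (α : ℝ) : ℝ → ℝ := fun r => Nt u α 2 r - r * Nt u α 1 r
def Gf (u : ℝ → ℝ) (α : ℝ) : ℝ → ℝ :=
  fun r => Nt u α 3 r / 2 - r * Nt u α 2 r + r ^ 2 * Nt u α 1 r / 2
def Hf (u : ℝ → ℝ) (α : ℝ) : ℝ → ℝ :=
  fun r => Nt u α 4 r / 6 - r * Nt u α 3 r / 2 + r ^ 2 * Nt u α 2 r / 2 - r ^ 3 * Nt u α 1 r / 6

lemma eDeriv (hα : -2 < α) (hd : Dec u C₀ m) {r : ℝ} (hr : 0 < r) :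
    HasDerivAt (Ef u α) (-(Nt u α 1 r)) r := by
  have h2 := ntDeriv (j := 2) hα (by norm_num) hd hr
  have h1 := ntDeriv (j := 1) hα (by norm_num) hd hr
  have h := h2.sub ((hasDerivAt_id' (x := r)).mul h1)
  refine h.congr_deriv (Eq.symm ?_)
  have e21 : ph u α 2 r = r * ph u α 1 r := by
    have := phMul (u := u) (α := α) 1 1 hr; norm_num at this; exact this
  rw [e21]
  ring

lemma gDeriv (hα : -2 < α) (hd : Dec u C₀ m) {r : ℝ} (hr : 0 < r) :
    HasDerivAt (Gf u α) (-(Ef u α r)) r := by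
  have h3 := ntDeriv (j := 3) hα (by norm_num) hd hr
  have h2 := ntDeriv (j := 2) hα (by norm_num) hd hr
  have h1 := ntDeriv (j := 1) hα (by norm_num) hd hr
  have h := ((h3.div_const 2).sub ((hasDerivAt_id' (x := r)).mul h2)).add
    (((hasDerivAt_pow 2 r).mul h1).div_const 2)
  refine h.congr_deriv (Eq.symm ?_)
  have e21 : ph u α 2 r = r * ph u α 1 r := by
    have := phMul (u := u) (α := α) 1 1 hr; norm_num at this; exact this
  have e32 : ph u α 3 r = r * ph u α 2 r := by
    have := phMul (u := u) (α := α) 2 1 hr; norm_num at this; exact this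
  rw [e32, e21]
  simp only [Ef]
  push_cast
  ring

lemma hDeriv (hα : -2 < α) (hd : Dec u C₀ m) {r : ℝ} (hr : 0 < r) :
    HasDerivAt (Hf u α) (-(Gf u α r)) r := by
  have h4 := ntDeriv (j := 4) hα (by norm_num) hd hr
  have h3 := ntDeriv (j := 3) hα (by norm_num) hd hr
  have h2 := ntDeriv (j := 2) hα (by norm_num) hd hr
  have h1 := ntDeriv (j := 1) hα (by norm_num) hd hr
  have h := (((h4.div_const 6).sub (((hasDerivAt_id' (x := r)).mul h3).div_const 2)).add
    (((hasDerivAt_pow 2 r).mul h2).div_const 2)).sub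
    (((hasDerivAt_pow 3 r).mul h1).div_const 6)
  refine h.congr_deriv (Eq.symm ?_)
  have e21 : ph u α 2 r = r * ph u α 1 r := by
    have := phMul (u := u) (α := α) 1 1 hr; norm_num at this; exact this
  have e32 : ph u α 3 r = r * ph u α 2 r := by
    have := phMul (u := u) (α := α) 2 1 hr; norm_num at this; exact this
  have e43 : ph u α 4 r = r * ph u α 3 r := by
    have := phMul (u := u) (α := α) 3 1 hr; norm_num at this; exact this
  rw [e43, e32, e21]
  simp only [Gf]
  push_cast
  ring

end SepAux
end

noncomputable section
namespace SepAux
variable {u : ℝ → ℝ} {α C₀ m : ℝ}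

lemma ntShift (hα : -2 < α) (hd : Dec u C₀ m) {j l : ℝ} (hj : 1 ≤ j) (k : ℕ)
    (hjk : j + k = l) {r : ℝ} (hr : 0 < r) :
    r ^ k * Nt u α j r ≤ Nt u α l r := by
  have hint_j : IntegrableOn (ph u α j) (Ioi r) :=
    (phInt hα hj hd).mono_set (Ioi_subset_Ioi hr.le)
  have hint_l : IntegrableOn (ph u α l) (Ioi r) := by
    refine (phInt hα ?_ hd).mono_set (Ioi_subset_Ioi hr.le)
    rw [← hjk]
    have : (0:ℝ) ≤ k := Nat.cast_nonneg k
    linarith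
  rw [Nt, ← integral_const_mul]
  refine setIntegral_mono_on (hint_j.const_mul _) hint_l measurableSet_Ioi ?_
  intro t ht
  have htr : r < t := ht
  have ht0 : (0:ℝ) < t := hr.trans htr
  have h1 : ph u α l t = t ^ (k:ℝ) * ph u α j t := by rw [← hjk]; exact phMul j k ht0
  rw [h1, Real.rpow_natCast]
  exact mul_le_mul_of_nonneg_right (pow_le_pow_left₀ hr.le htr.le k) (phNonneg j t ht0)

lemma ntExpBound (hα : -2 < α) (hd : Dec u C₀ m) {r : ℝ} (hr : 0 < r) :
    Nt u α 4 r ≤ Real.exp (-(m/2) * r)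
      * ∫ t in Ioi (0:ℝ), Real.exp C₀ * (t ^ (4+α) * Real.exp (-(m/2) * t)) := by
  have hm2 : 0 < m / 2 := half_pos hd.1
  set ψ : ℝ → ℝ := fun t => Real.exp C₀ * (t ^ (4+α) * Real.exp (-(m/2) * t)) with hψdef
  have hψint : IntegrableOn ψ (Ioi 0) :=
    (integrable_rpow_exp_neg (by linarith) hm2).const_mul _
  have hψnon : ∀ t ∈ Ioi (0:ℝ), 0 ≤ ψ t := by
    intro t ht
    exact mul_nonneg (Real.exp_pos _).le
      (mul_nonneg (Real.rpow_nonneg (le_of_lt ht) _) (Real.exp_pos _).le)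
  have step1 : Nt u α 4 r ≤ ∫ t in Ioi r, Real.exp (-(m/2) * r) * ψ t := by
    refine setIntegral_mono_on ((phInt hα (by norm_num) hd).mono_set (Ioi_subset_Ioi hr.le))
      ((hψint.mono_set (Ioi_subset_Ioi hr.le)).const_mul _) measurableSet_Ioi ?_
    intro t ht
    have htr : r < t := ht
    have ht0 : (0:ℝ) < t := hr.trans htr
    have e1 : Real.exp (u t) ≤ Real.exp (C₀ - m * t) :=
      Real.exp_le_exp.2 (hd.2.2 t ht0)
    have e2 : Real.exp (C₀ - m * t)
        = Real.exp C₀ * Real.exp (-(m/2) * t) * Real.exp (-(m/2) * t) := by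
      rw [← Real.exp_add, ← Real.exp_add]; ring_nf
    have e3 : Real.exp (-(m/2) * t) ≤ Real.exp (-(m/2) * r) := by
      apply Real.exp_le_exp.2
      nlinarith [hm2, htr]
    have hpw : (0:ℝ) ≤ t ^ (4 + α) := Real.rpow_nonneg ht0.le _
    have : ph u α 4 t ≤ t ^ (4 + α) * Real.exp (C₀ - m * t) := by
      unfold ph
      exact mul_le_mul_of_nonneg_left e1 hpw
    refine le_trans this ?_
    rw [e2, hψdef]
    have hnn : (0:ℝ) ≤ t ^ (4+α) * (Real.exp C₀ * Real.exp (-(m/2) * t)) := by positivity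
    calc t ^ (4 + α) * (Real.exp C₀ * Real.exp (-(m/2) * t) * Real.exp (-(m/2) * t))
        = (t ^ (4+α) * (Real.exp C₀ * Real.exp (-(m/2) * t))) * Real.exp (-(m/2) * t) := by
          ring
      _ ≤ (t ^ (4+α) * (Real.exp C₀ * Real.exp (-(m/2) * t))) * Real.exp (-(m/2) * r) :=
          mul_le_mul_of_nonneg_left e3 hnn
      _ = Real.exp (-(m/2) * r) * (Real.exp C₀ * (t ^ (4+α) * Real.exp (-(m/2) * t))) := by
          ring
  refine le_trans step1 ?_
  rw [integral_const_mul]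
  exact mul_le_mul_of_nonneg_left (tail_le_tail ψ hψint hψnon le_rfl hr.le)
    (Real.exp_pos _).le

end SepAux
end


set_option maxHeartbeats 2000000 in
/-- Asymptotics of the separatrix solution in dimension `N = 3`: the integrals
`A_k = ∫₀^∞ s^{k+α} e^{u(s)} ds` are finite for `k = 2, 3, 4` and
`u(r) = a₁ r + a₂ + a₃/r + O(e^{-cr})` as `r → ∞`, where
`a₁ = -A₂/2`, `a₂ = A₃/2`, `a₃ = -A₄/6`. -/
theorem separatrix_asymptotics_dim3
    (α : ℝ) (hα : -2 < α) (u v : ℝ → ℝ)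
    (h : IsEntireRadialSolution 3 α u v)
    (hsep : Filter.Tendsto v Filter.atTop (nhds 0)) :
    (∀ k : ℕ, k = 2 ∨ k = 3 ∨ k = 4 →
      IntegrableOn (fun s : ℝ => s ^ ((k : ℝ) + α) * Real.exp (u s)) (Set.Ioi 0)) ∧
    ∃ c > (0 : ℝ), ∃ C > (0 : ℝ), ∀ r : ℝ, 1 ≤ r →
      |u r - (-(∫ s in Set.Ioi (0 : ℝ), s ^ ((2 : ℝ) + α) * Real.exp (u s)) / 2) * r
          - (∫ s in Set.Ioi (0 : ℝ), s ^ ((3 : ℝ) + α) * Real.exp (u s)) / 2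
          - (-(∫ s in Set.Ioi (0 : ℝ), s ^ ((4 : ℝ) + α) * Real.exp (u s)) / 6) / r|
        ≤ C * Real.exp (-c * r) := by
  have h' := h
  unfold IsEntireRadialSolution at h'
  obtain ⟨hu2, hv2, hu0, hu'0, hv'0, odeu3, odev3⟩ := h'
  have odeu : ∀ r > (0:ℝ), deriv (deriv u) r + 2 * deriv u r / r = v r := by
    intro r hr
    have := odeu3 r hr
    norm_num at this
    convert this using 2
  have odev : ∀ r > (0:ℝ), deriv (deriv v) r + 2 * deriv v r / r
      = r ^ α * Real.exp (u r) := by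
    intro r hr
    have := odev3 r hr
    norm_num at this
    convert this using 2
  -- derivative packages
  have hWd : ∀ r ∈ Ioi (0:ℝ), HasDerivAt (SepAux.Wf v) (SepAux.ph u α 1 r) r :=
    fun r hr => SepAux.wDeriv hv2 odev hr
  have hVd : ∀ r ∈ Ioi (0:ℝ), HasDerivAt (SepAux.Vf v) (SepAux.Wf v r) r :=
    fun r hr => SepAux.vDeriv hv2 hr
  have hPd : ∀ r ∈ Ioi (0:ℝ), HasDerivAt (SepAux.Pf u) (r * v r) r :=
    fun r hr => SepAux.pDeriv hu2 odeu hr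
  have hUd : ∀ r ∈ Ioi (0:ℝ), HasDerivAt (SepAux.Uf u) (SepAux.Pf u r) r :=
    fun r hr => SepAux.uDeriv hu2 hr
  -- Step 1 : W ≤ 0 on Ioi 0
  have key1 : ∀ r₀ ∈ Ioi (0:ℝ), SepAux.Wf v r₀ ≤ 0 := by
    intro r₀ hr₀
    by_contra hpos
    push_neg at hpos
    have hr₀' : (0:ℝ) < r₀ := hr₀
    have hWmono : MonotoneOn (SepAux.Wf v) (Ici r₀) :=
      monotoneOn_Ici_of_hasDerivAt hr₀' hWd
        (fun x hx => SepAux.phNonneg 1 x (hr₀'.trans hx))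
    have hmono2 : MonotoneOn (fun x => SepAux.Vf v x - SepAux.Wf v r₀ * x) (Ici r₀) := by
      refine monotoneOn_Ici_of_hasDerivAt (f' := fun x => SepAux.Wf v x - SepAux.Wf v r₀)
        hr₀' ?_ ?_
      · intro x hx
        have h2 := (hasDerivAt_id' (x := x)).const_mul (SepAux.Wf v r₀)
        simpa [Pi.sub_def] using (hVd x hx).sub h2
      · intro x hx
        have := hWmono (self_mem_Ici) (mem_Ici.2 (le_of_lt hx)) (le_of_lt hx)
        show (0:ℝ) ≤ SepAux.Wf v x - SepAux.Wf v r₀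
        linarith
    have hlow : ∀ r, r₀ ≤ r → SepAux.Vf v r₀ + SepAux.Wf v r₀ * (r - r₀) ≤ SepAux.Vf v r := by
      intro r hr
      have := hmono2 self_mem_Ici (mem_Ici.2 hr) hr
      dsimp only at this
      linarith
    have hev : ∀ᶠ r in atTop,
        SepAux.Wf v r₀ + (SepAux.Vf v r₀ - SepAux.Wf v r₀ * r₀) / r ≤ v r := by
      filter_upwards [eventually_ge_atTop (max r₀ 1)] with r hr
      have hr₀r : r₀ ≤ r := le_trans (le_max_left _ _) hr
      have hrpos : (0:ℝ) < r := lt_of_lt_of_le one_pos (le_trans (le_max_right _ _) hr)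
      rw [show SepAux.Wf v r₀ + (SepAux.Vf v r₀ - SepAux.Wf v r₀ * r₀) / r
          = (SepAux.Wf v r₀ * (r - r₀) + SepAux.Vf v r₀) / r by field_simp; ring,
        div_le_iff₀ hrpos]
      have h2 := hlow r hr₀r
      have h3 : SepAux.Vf v r = r * v r := rfl
      rw [h3] at h2
      nlinarith [h2]
    have hlim : Tendsto (fun r => SepAux.Wf v r₀
        + (SepAux.Vf v r₀ - SepAux.Wf v r₀ * r₀) / r) atTop (𝓝 (SepAux.Wf v r₀ + 0)) :=
      tendsto_const_nhds.add (tendsto_const_nhds.div_atTop tendsto_id)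
    have hle := le_of_tendsto_of_tendsto hlim hsep hev
    rw [add_zero] at hle
    linarith
  -- Step 2 : W < 0 on Ioi 0
  have key2 : ∀ r ∈ Ioi (0:ℝ), SepAux.Wf v r < 0 := by
    intro r hr
    have hr' : (0:ℝ) < r := hr
    have hs : StrictMonoOn (SepAux.Wf v) (Ici r) :=
      strictMonoOn_Ici_of_hasDerivAt hr' hWd (fun x hx => by
        have hx0 : (0:ℝ) < x := hr'.trans hx
        exact mul_pos (Real.rpow_pos_of_pos hx0 _) (Real.exp_pos _))
    have h1 := hs self_mem_Ici (mem_Ici.2 (by linarith : r ≤ r + 1)) (lt_add_one r)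
    have h2 := key1 (r + 1) (by simp only [mem_Ioi]; linarith)
    linarith
  -- V is strictly decreasing on [0, ∞), V 1 < 0
  have hVcont : ContinuousOn (SepAux.Vf v) (Ici 0) := by
    have : ContinuousOn (fun x : ℝ => x * v x) (Ici 0) :=
      continuousOn_id.mul hv2.continuousOn
    exact this
  have hVanti : StrictAntiOn (SepAux.Vf v) (Ici 0) := by
    refine strictAntiOn_of_deriv_neg (convex_Ici 0) hVcont ?_
    intro x hx
    rw [interior_Ici] at hx
    rw [(hVd x hx).deriv]
    exact key2 x hx
  have hV0 : SepAux.Vf v 0 = 0 := by simp [SepAux.Vf]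
  have hV1 : SepAux.Vf v 1 < 0 := by
    have := hVanti (self_mem_Ici) (mem_Ici.2 zero_le_one) zero_lt_one
    rw [hV0] at this
    exact this
  set δ : ℝ := -SepAux.Vf v 1 with hδdef
  have hδpos : 0 < δ := by simp only [hδdef]; linarith
  have hVle : ∀ r, 1 ≤ r → SepAux.Vf v r ≤ -δ := by
    intro r hr
    rcases eq_or_lt_of_le hr with he | hl
    · rw [← he]; simp [hδdef]
    · have := hVanti (mem_Ici.2 zero_le_one) (mem_Ici.2 (by linarith)) hl
      simp only [hδdef]; linarith
  -- P bound on [1, ∞)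
  have hPle : ∀ r, 1 ≤ r → SepAux.Pf u r ≤ SepAux.Pf u 1 - δ * (r - 1) := by
    intro r hr
    have hanti : AntitoneOn (fun x => SepAux.Pf u x + δ * x) (Ici 1) := by
      refine antitoneOn_Ici_of_hasDerivAt (f' := fun x => x * v x + δ) one_pos ?_ ?_
      · intro x hx
        have h2 := (hasDerivAt_id' (x := x)).const_mul δ
        simpa [Pi.add_def] using (hPd x hx).add h2
      · intro x hx
        have hb := hVle x (le_of_lt hx)
        have h3 : SepAux.Vf v x = x * v x := rfl
        show x * v x + δ ≤ 0
        rw [h3] at hb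
        linarith
    have := hanti self_mem_Ici (mem_Ici.2 hr) hr
    dsimp only at this
    linarith
  -- U bound on [1, ∞)
  have hUle : ∀ r, 1 ≤ r → SepAux.Uf u r
      ≤ SepAux.Uf u 1 + (SepAux.Pf u 1 + δ) * (r - 1) - δ / 2 * (r ^ 2 - 1) := by
    intro r hr
    have hanti : AntitoneOn
        (fun x => SepAux.Uf u x - (SepAux.Pf u 1 + δ) * x + δ / 2 * x ^ 2) (Ici 1) := by
      refine antitoneOn_Ici_of_hasDerivAt
        (f' := fun x => SepAux.Pf u x - (SepAux.Pf u 1 + δ) + δ / 2 * (2 * x)) one_pos ?_ ?_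
      · intro x hx
        have h2 := (hasDerivAt_id' (x := x)).const_mul (SepAux.Pf u 1 + δ)
        have h3 : HasDerivAt (fun x : ℝ => δ / 2 * x ^ 2) (δ / 2 * (2 * x)) x := by
          have := (hasDerivAt_pow 2 x).const_mul (δ / 2)
          simpa using this
        simpa [Pi.add_def, Pi.sub_def] using ((hUd x hx).sub h2).add h3
      · intro x hx
        have hb := hPle x (le_of_lt hx)
        have e : δ * (x - 1) = δ * x - δ := by ring
        have e2 : δ / 2 * (2 * x) = δ * x := by ring
        show SepAux.Pf u x - (SepAux.Pf u 1 + δ) + δ / 2 * (2 * x) ≤ 0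
        rw [e2]
        rw [e] at hb
        linarith
    have := hanti self_mem_Ici (mem_Ici.2 hr) hr
    dsimp only at this
    nlinarith
  -- global linear decay of u
  obtain ⟨C₂, hC₂⟩ : ∃ C₂, ∀ x ∈ Icc (0:ℝ) 1, u x ≤ C₂ := by
    obtain ⟨C₂, hC₂⟩ := isCompact_Icc.exists_bound_of_continuousOn
      (hu2.continuousOn.mono (fun x hx => hx.1))
    exact ⟨C₂, fun x hx => le_trans (le_abs_self _) (hC₂ x hx)⟩
  set m : ℝ := δ / 2 with hmdef
  have hm : 0 < m := by simp only [hmdef]; linarith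
  set C₀ : ℝ := max (|SepAux.Uf u 1| + |SepAux.Pf u 1 + δ| + δ / 2) (C₂ + δ / 2) with hC₀def
  have hdec : SepAux.Dec u C₀ m := by
    refine ⟨hm, hu2.continuousOn, ?_⟩
    intro t ht
    have ht0 : (0:ℝ) < t := ht
    rcases le_total t 1 with h1 | h1
    · have := hC₂ t ⟨ht0.le, h1⟩
      have h2 : m * t ≤ δ / 2 := by
        rw [hmdef]
        nlinarith
      have h3 : C₂ + δ / 2 ≤ C₀ := le_max_right _ _
      linarith
    · have hU := hUle t h1
      have hUt : SepAux.Uf u t = t * u t := rfl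
      rw [hUt] at hU
      set B : ℝ := |SepAux.Uf u 1| + |SepAux.Pf u 1 + δ| + δ / 2 with hBdef
      have hkey : t * (u t + m * t) ≤ B * t := by
        have e1 : SepAux.Uf u 1 ≤ |SepAux.Uf u 1| * t := by
          nlinarith [le_abs_self (SepAux.Uf u 1), abs_nonneg (SepAux.Uf u 1)]
        have e2 : (SepAux.Pf u 1 + δ) * (t - 1) ≤ |SepAux.Pf u 1 + δ| * t := by
          nlinarith [le_abs_self (SepAux.Pf u 1 + δ), abs_nonneg (SepAux.Pf u 1 + δ)]
        have e3 : δ / 2 ≤ δ / 2 * t := by nlinarith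
        have : t * (u t + m * t) = t * u t + δ / 2 * t ^ 2 := by
          rw [hmdef]; ring
        rw [this, hBdef]
        nlinarith
      have : u t + m * t ≤ B := le_of_mul_le_mul_left (by linarith [hkey]) ht0
      have hBC : B ≤ C₀ := le_max_left _ _
      linarith
  -- κ = 0 : W r = -N₁ r
  have hN1d : ∀ x ∈ Ioi (0:ℝ), HasDerivAt (SepAux.Nt u α 1) (-(SepAux.ph u α 1 x)) x :=
    fun x hx => SepAux.ntDeriv hα le_rfl hdec hx
  have hWN : ∀ r ∈ Ioi (0:ℝ), SepAux.Wf v r + SepAux.Nt u α 1 r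
      = SepAux.Wf v 1 + SepAux.Nt u α 1 1 := by
    intro r hr
    refine constOn_Ioi_of_hasDerivAt
      (f := fun x => SepAux.Wf v x + SepAux.Nt u α 1 x) ?_ hr one_pos
    intro x hx
    simpa [Pi.add_def] using (hWd x hx).add (hN1d x hx)
  set κ : ℝ := SepAux.Wf v 1 + SepAux.Nt u α 1 1 with hκdef
  have hWκ : ∀ r ∈ Ioi (0:ℝ), SepAux.Wf v r = κ - SepAux.Nt u α 1 r := by
    intro r hr; have := hWN r hr; linarith
  have hκle : κ ≤ 0 := by
    have hlim : Tendsto (fun r => κ - SepAux.Nt u α 1 r) atTop (𝓝 (κ - 0)) :=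
      tendsto_const_nhds.sub (SepAux.ntTop hα le_rfl hdec)
    rw [sub_zero] at hlim
    refine le_of_tendsto hlim ?_
    filter_upwards [eventually_gt_atTop (0:ℝ)] with r hr
    have h1 := key2 r hr
    have h2 := hWκ r hr
    linarith
  have hκ : κ = 0 := by
    rcases eq_or_lt_of_le hκle with he | hneg
    · exact he
    exfalso
    have hWle : ∀ r ∈ Ioi (0:ℝ), SepAux.Wf v r ≤ κ := by
      intro r hr
      have h2 := hWκ r hr
      have h3 := SepAux.ntNonneg (u := u) (α := α) 1 (le_of_lt (show (0:ℝ) < r from hr))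
      linarith
    have hanti : AntitoneOn (fun x => SepAux.Vf v x - κ * x) (Ici 1) := by
      refine antitoneOn_Ici_of_hasDerivAt (f' := fun x => SepAux.Wf v x - κ) one_pos ?_ ?_
      · intro x hx
        have h2 := (hasDerivAt_id' (x := x)).const_mul κ
        simpa [Pi.sub_def] using (hVd x hx).sub h2
      · intro x hx
        have := hWle x (show (0:ℝ) < x from lt_trans zero_lt_one (mem_Ioi.mp hx))
        show SepAux.Wf v x - κ ≤ 0
        linarith
    have hev : ∀ᶠ r in atTop, v r ≤ κ + (SepAux.Vf v 1 - κ) / r := by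
      filter_upwards [eventually_ge_atTop (1:ℝ)] with r hr
      have hrpos : (0:ℝ) < r := lt_of_lt_of_le one_pos hr
      have h2 := hanti self_mem_Ici (mem_Ici.2 hr) hr
      dsimp only at h2
      rw [show κ + (SepAux.Vf v 1 - κ) / r = (κ * (r - 1) + SepAux.Vf v 1) / r by
        field_simp; ring, le_div_iff₀ hrpos]
      have h3 : SepAux.Vf v r = r * v r := rfl
      rw [h3] at h2
      nlinarith [h2]
    have hlim2 : Tendsto (fun r => κ + (SepAux.Vf v 1 - κ) / r) atTop (𝓝 (κ + 0)) :=
      tendsto_const_nhds.add (tendsto_const_nhds.div_atTop tendsto_id)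
    have := le_of_tendsto_of_tendsto hsep hlim2 hev
    rw [add_zero] at this
    linarith
  -- moments at 0
  set A2 : ℝ := SepAux.Nt u α 2 0 with hA2def
  set A3 : ℝ := SepAux.Nt u α 3 0 with hA3def
  set A4 : ℝ := SepAux.Nt u α 4 0 with hA4def
  -- limits at 0⁺
  have hid0 : Tendsto (fun r : ℝ => r) (𝓝[>] (0:ℝ)) (𝓝 0) :=
    tendsto_id.mono_right nhdsWithin_le_nhds
  have hmulN : ∀ (j : ℝ), 1 ≤ j → ∀ (k : ℕ), k ≠ 0 →
      Tendsto (fun r => r ^ k * SepAux.Nt u α j r) (𝓝[>] (0:ℝ)) (𝓝 0) := by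
    intro j hj k hk
    have hpowk : Tendsto (fun r : ℝ => r ^ k * SepAux.Nt u α j 0) (𝓝[>] (0:ℝ)) (𝓝 0) := by
      have h2 : Tendsto (fun r : ℝ => r ^ k) (𝓝[>] (0:ℝ)) (𝓝 0) := by
        have := hid0.pow k
        simpa [zero_pow hk] using this
      simpa using h2.mul_const (SepAux.Nt u α j 0)
    refine squeeze_zero' ?_ ?_ hpowk
    · filter_upwards [self_mem_nhdsWithin] with r hr
      exact mul_nonneg (pow_nonneg (le_of_lt hr) k) (SepAux.ntNonneg j (le_of_lt hr))
    · filter_upwards [self_mem_nhdsWithin] with r hr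
      exact mul_le_mul_of_nonneg_left (SepAux.ntMono hα hj hdec le_rfl (le_of_lt hr))
        (pow_nonneg (le_of_lt hr) k)
  have hmulN1 : ∀ (j : ℝ), 1 ≤ j →
      Tendsto (fun r => r * SepAux.Nt u α j r) (𝓝[>] (0:ℝ)) (𝓝 0) := by
    intro j hj
    have := hmulN j hj 1 one_ne_zero
    simpa using this
  have hNt0 : ∀ (j : ℝ), 1 ≤ j →
      Tendsto (SepAux.Nt u α j) (𝓝[>] (0:ℝ)) (𝓝 (SepAux.Nt u α j 0)) :=
    fun j hj => SepAux.ntT0 hα hj hdec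
  have hE0 : Tendsto (SepAux.Ef u α) (𝓝[>] (0:ℝ)) (𝓝 A2) := by
    have h2 := (hNt0 2 (by norm_num)).sub (hmulN1 1 le_rfl)
    rw [sub_zero] at h2
    exact h2
  have hG0 : Tendsto (SepAux.Gf u α) (𝓝[>] (0:ℝ)) (𝓝 (A3 / 2)) := by
    have h2 := (((hNt0 3 (by norm_num)).div_const 2).sub (hmulN1 2 (by norm_num))).add
      ((hmulN 1 le_rfl 2 two_ne_zero).div_const 2)
    simp at h2; exact h2
  have hH0 : Tendsto (SepAux.Hf u α) (𝓝[>] (0:ℝ)) (𝓝 (A4 / 6)) := by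
    have h2 := ((((hNt0 4 (by norm_num)).div_const 6).sub
        ((hmulN1 3 (by norm_num)).div_const 2)).add
        ((hmulN 2 (by norm_num) 2 two_ne_zero).div_const 2)).sub
        ((hmulN 1 le_rfl 3 three_ne_zero).div_const 6)
    norm_num at h2
    exact h2
  have hVlim0 : Tendsto (SepAux.Vf v) (𝓝[>] (0:ℝ)) (𝓝 0) := by
    have h2 := hVcont 0 self_mem_Ici
    rw [ContinuousWithinAt, hV0] at h2
    exact h2.mono_left (nhdsWithin_mono _ Ioi_subset_Ici_self)
  -- V = E - A2
  have hEd : ∀ x ∈ Ioi (0:ℝ), HasDerivAt (SepAux.Ef u α) (-(SepAux.Nt u α 1 x)) x :=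
    fun x hx => SepAux.eDeriv hα hdec hx
  have hVE : ∀ r ∈ Ioi (0:ℝ), SepAux.Vf v r - SepAux.Ef u α r
      = SepAux.Vf v 1 - SepAux.Ef u α 1 := by
    intro r hr
    refine constOn_Ioi_of_hasDerivAt
      (f := fun x => SepAux.Vf v x - SepAux.Ef u α x) ?_ hr one_pos
    intro x hx
    have hcomb := (hVd x hx).sub (hEd x hx)
    refine hcomb.congr_deriv (Eq.symm ?_)
    rw [hWκ x hx, hκ]
    ring
  have hc₂ : SepAux.Vf v 1 - SepAux.Ef u α 1 = -A2 := by
    have hconst : Tendsto (fun r => SepAux.Vf v r - SepAux.Ef u α r) (𝓝[>] (0:ℝ))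
        (𝓝 (SepAux.Vf v 1 - SepAux.Ef u α 1)) := by
      refine Tendsto.congr' ?_ tendsto_const_nhds
      filter_upwards [self_mem_nhdsWithin] with r hr
      exact (hVE r hr).symm
    have h2 := hVlim0.sub hE0
    rw [zero_sub] at h2
    exact tendsto_nhds_unique hconst h2
  have hVE' : ∀ r ∈ Ioi (0:ℝ), r * v r = SepAux.Ef u α r - A2 := by
    intro r hr
    have h2 := hVE r hr
    rw [hc₂] at h2
    have h3 : SepAux.Vf v r = r * v r := rfl
    linarith [h3 ▸ h2]
  -- P + G + A2·r is constant, equal to A3/2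
  have hGd : ∀ x ∈ Ioi (0:ℝ), HasDerivAt (SepAux.Gf u α) (-(SepAux.Ef u α x)) x :=
    fun x hx => SepAux.gDeriv hα hdec hx
  have hPG : ∀ r ∈ Ioi (0:ℝ), SepAux.Pf u r + SepAux.Gf u α r + A2 * r
      = SepAux.Pf u 1 + SepAux.Gf u α 1 + A2 * 1 := by
    intro r hr
    refine constOn_Ioi_of_hasDerivAt
      (f := fun x => SepAux.Pf u x + SepAux.Gf u α x + A2 * x) ?_ hr one_pos
    intro x hx
    have h3 := (hasDerivAt_id' (x := x)).const_mul A2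
    have hcomb := ((hPd x hx).add (hGd x hx)).add h3
    refine hcomb.congr_deriv (Eq.symm ?_)
    have h4 := hVE' x hx
    rw [h4]
    ring
  have hu_cont0 : Tendsto u (𝓝[>] (0:ℝ)) (𝓝 0) := by
    have h2 := hu2.continuousOn 0 self_mem_Ici
    rw [ContinuousWithinAt, hu0] at h2
    exact h2.mono_left (nhdsWithin_mono _ Ioi_subset_Ici_self)
  have hderivu0 : Tendsto (fun r => r * deriv u r) (𝓝[>] (0:ℝ)) (𝓝 0) := by
    have hcd := hu2.continuousOn_derivWithin (uniqueDiffOn_Ici 0) (by norm_num)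
    have hdw : Tendsto (derivWithin u (Ici 0)) (𝓝[Ici 0] (0:ℝ)) (𝓝 0) := by
      have h2 := hcd 0 self_mem_Ici
      rw [ContinuousWithinAt, hu'0] at h2
      exact h2
    have hdw' : Tendsto (deriv u) (𝓝[>] (0:ℝ)) (𝓝 0) := by
      refine Tendsto.congr' ?_ (hdw.mono_left (nhdsWithin_mono _ Ioi_subset_Ici_self))
      filter_upwards [self_mem_nhdsWithin] with r hr
      exact derivWithin_of_mem_nhds (mem_of_superset (Ioi_mem_nhds hr) Ioi_subset_Ici_self)
    simpa using hid0.mul hdw'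
  have hP0 : Tendsto (SepAux.Pf u) (𝓝[>] (0:ℝ)) (𝓝 0) := by
    have h2 := hu_cont0.add hderivu0
    rw [add_zero] at h2
    exact h2
  have hb' : SepAux.Pf u 1 + SepAux.Gf u α 1 + A2 * 1 = A3 / 2 := by
    have hconst : Tendsto (fun r => SepAux.Pf u r + SepAux.Gf u α r + A2 * r) (𝓝[>] (0:ℝ))
        (𝓝 (SepAux.Pf u 1 + SepAux.Gf u α 1 + A2 * 1)) := by
      refine Tendsto.congr' ?_ tendsto_const_nhds
      filter_upwards [self_mem_nhdsWithin] with r hr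
      exact (hPG r hr).symm
    have hA2r : Tendsto (fun r : ℝ => A2 * r) (𝓝[>] (0:ℝ)) (𝓝 0) := by
      have h2 := hid0.const_mul A2
      have h3 : A2 * (0:ℝ) = 0 := by ring
      rw [h3] at h2
      exact h2
    have h2 := (hP0.add hG0).add hA2r
    rw [zero_add, add_zero] at h2
    exact tendsto_nhds_unique hconst h2
  -- U - H + A2/2 r² - A3/2 r is constant, equal to -(A4/6)
  have hHd : ∀ x ∈ Ioi (0:ℝ), HasDerivAt (SepAux.Hf u α) (-(SepAux.Gf u α x)) x :=
    fun x hx => SepAux.hDeriv hα hdec hx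
  have hUH : ∀ r ∈ Ioi (0:ℝ),
      SepAux.Uf u r - SepAux.Hf u α r + A2 / 2 * r ^ 2 - A3 / 2 * r
      = SepAux.Uf u 1 - SepAux.Hf u α 1 + A2 / 2 * 1 ^ 2 - A3 / 2 * 1 := by
    intro r hr
    refine constOn_Ioi_of_hasDerivAt
      (f := fun x => SepAux.Uf u x - SepAux.Hf u α x + A2 / 2 * x ^ 2 - A3 / 2 * x) ?_
      hr one_pos
    intro x hx
    have h3 := (hasDerivAt_pow 2 x).const_mul (A2 / 2)
    have h4 := (hasDerivAt_id' (x := x)).const_mul (A3 / 2)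
    have hcomb := (((hUd x hx).sub (hHd x hx)).add h3).sub h4
    refine hcomb.congr_deriv (Eq.symm ?_)
    have h5 := hPG x hx
    rw [hb'] at h5
    push_cast
    linear_combination -h5
  have hU0 : Tendsto (SepAux.Uf u) (𝓝[>] (0:ℝ)) (𝓝 0) := by
    have h2 := hid0.mul hu_cont0
    rw [mul_zero] at h2
    exact h2
  have hc' : SepAux.Uf u 1 - SepAux.Hf u α 1 + A2 / 2 * 1 ^ 2 - A3 / 2 * 1 = -(A4 / 6) := by
    have hconst : Tendsto
        (fun r => SepAux.Uf u r - SepAux.Hf u α r + A2 / 2 * r ^ 2 - A3 / 2 * r)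
        (𝓝[>] (0:ℝ))
        (𝓝 (SepAux.Uf u 1 - SepAux.Hf u α 1 + A2 / 2 * 1 ^ 2 - A3 / 2 * 1)) := by
      refine Tendsto.congr' ?_ tendsto_const_nhds
      filter_upwards [self_mem_nhdsWithin] with r hr
      exact (hUH r hr).symm
    have hsq : Tendsto (fun r : ℝ => A2 / 2 * r ^ 2) (𝓝[>] (0:ℝ)) (𝓝 0) := by
      have h2 := (hid0.pow 2).const_mul (A2 / 2)
      have h3 : A2 / 2 * (0:ℝ) ^ 2 = 0 := by ring
      rw [h3] at h2
      exact h2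
    have hlin : Tendsto (fun r : ℝ => A3 / 2 * r) (𝓝[>] (0:ℝ)) (𝓝 0) := by
      have h2 := hid0.const_mul (A3 / 2)
      have h3 : A3 / 2 * (0:ℝ) = 0 := by ring
      rw [h3] at h2
      exact h2
    have h2 := ((hU0.sub hH0).add hsq).sub hlin
    rw [add_zero, sub_zero, zero_sub] at h2
    exact tendsto_nhds_unique hconst h2
  have hrep : ∀ r ∈ Ioi (0:ℝ),
      r * u r = SepAux.Hf u α r - A2 / 2 * r ^ 2 + A3 / 2 * r - A4 / 6 := by
    intro r hr
    have h2 := hUH r hr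
    rw [hc'] at h2
    have h3 : SepAux.Uf u r = r * u r := rfl
    rw [h3] at h2
    linarith only [h2]
  -- conclusion
  set K : ℝ := ∫ t in Ioi (0:ℝ), Real.exp C₀ * (t ^ (4+α) * Real.exp (-(m/2) * t)) with hKdef
  have hK0 : 0 ≤ K := by
    rw [hKdef]
    refine setIntegral_nonneg measurableSet_Ioi ?_
    intro t ht
    have ht0 : (0:ℝ) < t := ht
    positivity
  constructor
  · intro k hk
    have hint : ∀ j : ℝ, 1 ≤ j →
        IntegrableOn (fun s : ℝ => s ^ (j + α) * Real.exp (u s)) (Ioi 0) := by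
      intro j hj
      have := SepAux.phInt (j := j) hα hj hdec
      exact this
    rcases hk with rfl | rfl | rfl
    · exact hint _ (by norm_num)
    · exact hint _ (by norm_num)
    · exact hint _ (by norm_num)
  · refine ⟨m / 2, half_pos hm, 4 / 3 * K + 1, by positivity, ?_⟩
    intro r hr
    have hr0 : (0:ℝ) < r := lt_of_lt_of_le one_pos hr
    have e2 : (∫ s in Ioi (0:ℝ), s ^ ((2:ℝ) + α) * Real.exp (u s)) = A2 := by
      rw [hA2def]; rfl
    have e3 : (∫ s in Ioi (0:ℝ), s ^ ((3:ℝ) + α) * Real.exp (u s)) = A3 := by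
      rw [hA3def]; rfl
    have e4 : (∫ s in Ioi (0:ℝ), s ^ ((4:ℝ) + α) * Real.exp (u s)) = A4 := by
      rw [hA4def]; rfl
    rw [e2, e3, e4]
    have hrepr := hrep r hr0
    have hexpr : u r - -A2 / 2 * r - A3 / 2 - -A4 / 6 / r = SepAux.Hf u α r / r := by
      field_simp
      linear_combination (12:ℝ) * hrepr
    rw [hexpr, abs_div, abs_of_pos hr0]
    have hdiv : |SepAux.Hf u α r| / r ≤ |SepAux.Hf u α r| :=
      div_le_self (abs_nonneg _) hr
    have s1 : r ^ 1 * SepAux.Nt u α 3 r ≤ SepAux.Nt u α 4 r :=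
      SepAux.ntShift hα hdec (by norm_num) 1 (by norm_num) hr0
    have s2 : r ^ 2 * SepAux.Nt u α 2 r ≤ SepAux.Nt u α 4 r :=
      SepAux.ntShift hα hdec (by norm_num) 2 (by norm_num) hr0
    have s3 : r ^ 3 * SepAux.Nt u α 1 r ≤ SepAux.Nt u α 4 r :=
      SepAux.ntShift hα hdec (by norm_num) 3 (by norm_num) hr0
    have n1 : 0 ≤ SepAux.Nt u α 1 r := SepAux.ntNonneg 1 hr0.le
    have n2 : 0 ≤ SepAux.Nt u α 2 r := SepAux.ntNonneg 2 hr0.le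
    have n3 : 0 ≤ SepAux.Nt u α 3 r := SepAux.ntNonneg 3 hr0.le
    have n4 : 0 ≤ SepAux.Nt u α 4 r := SepAux.ntNonneg 4 hr0.le
    have p1 : (0:ℝ) ≤ r ^ 1 * SepAux.Nt u α 3 r := mul_nonneg (by positivity) n3
    have p2 : (0:ℝ) ≤ r ^ 2 * SepAux.Nt u α 2 r := mul_nonneg (by positivity) n2
    have p3 : (0:ℝ) ≤ r ^ 3 * SepAux.Nt u α 1 r := mul_nonneg (by positivity) n1
    have habs : |SepAux.Hf u α r| ≤ 4 / 3 * SepAux.Nt u α 4 r := by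
      have hHdef : SepAux.Hf u α r = SepAux.Nt u α 4 r / 6 - r * SepAux.Nt u α 3 r / 2
          + r ^ 2 * SepAux.Nt u α 2 r / 2 - r ^ 3 * SepAux.Nt u α 1 r / 6 := rfl
      rw [hHdef]
      rw [pow_one] at s1 p1
      rw [abs_le]
      constructor
      · linarith only [s1, s2, s3, p1, p2, p3, n4]
      · linarith only [s1, s2, s3, p1, p2, p3, n4]
    have hexp := SepAux.ntExpBound hα hdec hr0
    rw [← hKdef] at hexp
    have hexppos : (0:ℝ) < Real.exp (-(m / 2) * r) := Real.exp_pos _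
    calc |SepAux.Hf u α r| / r ≤ |SepAux.Hf u α r| := hdiv
      _ ≤ 4 / 3 * SepAux.Nt u α 4 r := habs
      _ ≤ 4 / 3 * (Real.exp (-(m / 2) * r) * K) := by linarith only [hexp]
      _ ≤ (4 / 3 * K + 1) * Real.exp (-(m / 2) * r) := by nlinarith only [hexppos, hK0]
end
end
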